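/- arXiv:1005.2137 — 5 statements merged into one kernel-verified Lean document; each statement's English description precedes it below -/
import Mathlib

section
/- Let $n \ge 1$ and let $X_1,\dots,X_n$ be real numbers with mean $\bar{X}_n = n^{-1}\sum_{t=1}^n X_t$. Define the partial sums $S_t = \sum_{j=1}^{t}(X_j - \bar{X}_n)$ for $1 \le t \le n$ and the sample autocovariances $\hat{\gamma}_n(j) = n^{-1}\sum_{t=1}^{n-|j|}(X_t-\bar{X}_n)(X_{t+|j|}-\bar{X}_n)$ for $|j| \le n-1$. Then $2 n^{-2}\sum_{t=1}^{n} S_t^2 = \sum_{j=-(n-1)}^{n-1}\big(1 - |j|/n\big)\,\hat{\gamma}_n(j)$; that is, twice the self-normalizer $W_n = n^{-2}\sum_{t=1}^n S_t^2$ equals the Bartlett lag-window long-run variance estimate with bandwidth equal to the sample size ($b=1$). -/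
open Finset

/-- Sum of squared partial sums as a weighted double sum. -/
private lemma sn_lemA (n : ℕ) (Y : ℕ → ℝ) :
    ∑ t ∈ Icc 1 n, (∑ a ∈ Icc 1 t, Y a) ^ 2
      = ∑ a ∈ Icc 1 n, ∑ b ∈ Icc 1 n, ((n : ℝ) + 1 - max a b) * (Y a * Y b) := by
  have step1 : ∀ t ∈ Icc 1 n, (∑ a ∈ Icc 1 t, Y a) ^ 2
      = ∑ a ∈ Icc 1 n, ∑ b ∈ Icc 1 n, (if max a b ≤ t then Y a * Y b else 0) := by
    intro t ht
    rw [mem_Icc] at ht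
    have hfil : (Icc 1 n).filter (fun b => b ≤ t) = Icc 1 t := by
      ext b; simp [mem_Icc, mem_filter]; omega
    have hb : ∀ a, ∑ b ∈ Icc 1 n, (if max a b ≤ t then Y a * Y b else 0)
        = if a ≤ t then ∑ b ∈ Icc 1 t, Y a * Y b else 0 := by
      intro a
      by_cases ha : a ≤ t
      · rw [if_pos ha, ← hfil, sum_filter]
        exact sum_congr rfl fun b _ => by simp [max_le_iff, ha]
      · simp [max_le_iff, ha]
    rw [sq, Finset.sum_mul_sum]
    rw [Finset.sum_congr rfl (fun a (_ : a ∈ Icc 1 n) => hb a)]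
    rw [← sum_filter, hfil]
  rw [Finset.sum_congr rfl step1, Finset.sum_comm]
  refine sum_congr rfl fun a ha => ?_
  rw [Finset.sum_comm]
  refine sum_congr rfl fun b hb => ?_
  rw [mem_Icc] at ha hb
  have hfil2 : (Icc 1 n).filter (fun t => max a b ≤ t) = Icc (max a b) n := by
    ext t; simp [mem_Icc, mem_filter]; omega
  rw [← sum_filter, hfil2, sum_const, Nat.card_Icc, nsmul_eq_mul]
  rw [Nat.cast_sub (by omega)]
  push_cast
  ring

/-- The Bartlett lag-window sum as a weighted double sum over pairs. -/
private lemma sn_lemB (n : ℕ) (Y : ℕ → ℝ) :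
    ∑ j ∈ Icc (-(n : ℤ) + 1) ((n : ℤ) - 1),
        ((n : ℝ) - |(j : ℝ)|) * ∑ t ∈ Icc 1 (n - j.natAbs), Y t * Y (t + j.natAbs)
      = ∑ a ∈ Icc 1 n, ∑ b ∈ Icc 1 n, ((n : ℝ) - |(a : ℝ) - (b : ℝ)|) * (Y a * Y b) := by
  have habs : ∀ j : ℤ, ((j.natAbs : ℝ)) = |(j : ℝ)| := by
    intro j
    rw [Nat.cast_natAbs]
    exact Int.cast_abs
  simp only [Finset.mul_sum]
  rw [Finset.sum_sigma', ← Finset.sum_product']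
  refine Finset.sum_nbij'
    (fun p => if 0 ≤ p.1 then (p.2, p.2 + p.1.natAbs) else (p.2 + p.1.natAbs, p.2))
    (fun q => ⟨(q.2 : ℤ) - (q.1 : ℤ), min q.1 q.2⟩) ?_ ?_ ?_ ?_ ?_
  · rintro ⟨j, t⟩ hp
    simp only [mem_sigma, mem_Icc] at hp
    dsimp only
    split_ifs with h0 <;> simp only [mem_product, mem_Icc] <;> omega
  · rintro ⟨a, b⟩ hq
    simp only [mem_product, mem_Icc] at hq
    simp only [mem_sigma, mem_Icc]
    omega
  · rintro ⟨j, t⟩ hp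
    simp only [mem_sigma, mem_Icc] at hp
    dsimp only
    split_ifs with h0
    · refine Sigma.ext ?_ ?_
      · show ((t + j.natAbs : ℕ) : ℤ) - (t : ℤ) = j
        omega
      · simp only [heq_eq_eq]
        show min t (t + j.natAbs) = t
        omega
    · refine Sigma.ext ?_ ?_
      · show ((t : ℕ) : ℤ) - ((t + j.natAbs : ℕ) : ℤ) = j
        omega
      · simp only [heq_eq_eq]
        show min (t + j.natAbs) t = t
        omega
  · rintro ⟨a, b⟩ hq
    simp only [mem_product, mem_Icc] at hq
    dsimp only
    by_cases h : (a : ℤ) ≤ b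
    · rw [if_pos (by omega)]
      simp only [Prod.mk.injEq]
      omega
    · rw [if_neg (by omega)]
      simp only [Prod.mk.injEq]
      omega
  · rintro ⟨j, t⟩ hp
    simp only [mem_sigma, mem_Icc] at hp
    dsimp only
    by_cases h0 : 0 ≤ j
    · rw [if_pos h0]
      have : |(t : ℝ) - ((t + j.natAbs : ℕ) : ℝ)| = |(j : ℝ)| := by
        push_cast
        rw [show (t : ℝ) - (t + (j.natAbs : ℝ)) = -(j.natAbs : ℝ) by ring, abs_neg,
          abs_of_nonneg (by positivity), habs]
      rw [this]
    · rw [if_neg h0]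
      have : |((t + j.natAbs : ℕ) : ℝ) - (t : ℝ)| = |(j : ℝ)| := by
        push_cast
        rw [show (t : ℝ) + (j.natAbs : ℝ) - t = (j.natAbs : ℝ) by ring,
          abs_of_nonneg (by positivity), habs]
      rw [this]
      ring

/-- Twice the self-normalizer `Wₙ = n⁻² ∑ₜ Sₜ²` built from the centered
partial sums equals the Bartlett lag-window long-run variance estimate with
bandwidth equal to the sample size (`b = 1`). -/
theorem two_selfnormalizer_eq_bartlett
    (n : ℕ) (hn : 1 ≤ n) (X : ℕ → ℝ) :
    let Xbar : ℝ := (∑ t ∈ Finset.Icc 1 n, X t) / n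
    let S : ℕ → ℝ := fun t => ∑ j ∈ Finset.Icc 1 t, (X j - Xbar)
    let γhat : ℤ → ℝ := fun j =>
      (∑ t ∈ Finset.Icc 1 (n - j.natAbs), (X t - Xbar) * (X (t + j.natAbs) - Xbar)) / n
    2 * ((n : ℝ) ^ 2)⁻¹ * ∑ t ∈ Finset.Icc 1 n, S t ^ 2
      = ∑ j ∈ Finset.Icc (-(n : ℤ) + 1) ((n : ℤ) - 1),
          (1 - |(j : ℝ)| / n) * γhat j := by
  intro Xbar S γhat
  have hn0 : (n : ℝ) ≠ 0 := Nat.cast_ne_zero.mpr (by omega)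
  set Y : ℕ → ℝ := fun t => X t - Xbar with hYdef
  have hY : ∑ a ∈ Icc 1 n, Y a = 0 := by
    simp only [hYdef, Finset.sum_sub_distrib, Finset.sum_const, Nat.card_Icc,
      nsmul_eq_mul, Xbar]
    have : (n + 1 - 1 : ℕ) = n := by omega
    rw [this]
    field_simp
    ring
  -- rewrite the RHS pulling out n⁻²
  have hRHS : ∑ j ∈ Finset.Icc (-(n : ℤ) + 1) ((n : ℤ) - 1), (1 - |(j : ℝ)| / n) * γhat j
      = ((n : ℝ) ^ 2)⁻¹ * ∑ j ∈ Finset.Icc (-(n : ℤ) + 1) ((n : ℤ) - 1),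
          ((n : ℝ) - |(j : ℝ)|) * ∑ t ∈ Icc 1 (n - j.natAbs), Y t * Y (t + j.natAbs) := by
    rw [Finset.mul_sum]
    refine sum_congr rfl fun j _ => ?_
    show (1 - |(j : ℝ)| / n) * ((∑ t ∈ Icc 1 (n - j.natAbs), Y t * Y (t + j.natAbs)) / n) = _
    have h1 : (1 - |(j : ℝ)| / n) = ((n : ℝ) - |(j : ℝ)|) / n := by field_simp
    rw [h1, div_mul_div_comm, ← sq, div_eq_inv_mul]
  rw [hRHS, sn_lemB n Y]
  have hLHS : ∑ t ∈ Finset.Icc 1 n, S t ^ 2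
      = ∑ a ∈ Icc 1 n, ∑ b ∈ Icc 1 n, ((n : ℝ) + 1 - max a b) * (Y a * Y b) :=
    sn_lemA n Y
  rw [hLHS]
  -- reduce to the double-sum identity
  rw [show (2 : ℝ) * ((n : ℝ) ^ 2)⁻¹ * ∑ a ∈ Icc 1 n, ∑ b ∈ Icc 1 n,
        ((n : ℝ) + 1 - max a b) * (Y a * Y b)
      = ((n : ℝ) ^ 2)⁻¹ * (2 * ∑ a ∈ Icc 1 n, ∑ b ∈ Icc 1 n,
        ((n : ℝ) + 1 - max a b) * (Y a * Y b)) by ring]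
  congr 1
  -- key identity: the difference of the coefficients is a + b - n - 2
  have hcoef : ∀ a b : ℕ, ((n : ℝ) - |(a : ℝ) - (b : ℝ)|)
      = 2 * ((n : ℝ) + 1 - max a b) + ((a : ℝ) + b - n - 2) := by
    intro a b
    rcases le_total a b with h | h
    · have h' : (a : ℝ) ≤ b := by exact_mod_cast h
      rw [abs_of_nonpos (sub_nonpos.mpr h'), Nat.cast_max, max_eq_right h']
      ring
    · have h' : (b : ℝ) ≤ a := by exact_mod_cast h
      rw [abs_of_nonneg (sub_nonneg.mpr h'), Nat.cast_max, max_eq_left h']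
      ring
  have hzero : ∑ a ∈ Icc 1 n, ∑ b ∈ Icc 1 n, ((a : ℝ) + b - n - 2) * (Y a * Y b) = 0 := by
    have hinner : ∀ a ∈ Icc 1 n, ∑ b ∈ Icc 1 n, ((a : ℝ) + b - n - 2) * (Y a * Y b)
        = Y a * ∑ b ∈ Icc 1 n, (b : ℝ) * Y b := by
      intro a _
      have expand : ∑ b ∈ Icc 1 n, ((a : ℝ) + b - n - 2) * (Y a * Y b)
          = ((a : ℝ) - n - 2) * (Y a * ∑ b ∈ Icc 1 n, Y b)
            + Y a * ∑ b ∈ Icc 1 n, (b : ℝ) * Y b := by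
        rw [Finset.mul_sum, Finset.mul_sum, Finset.mul_sum, ← Finset.sum_add_distrib]
        exact sum_congr rfl fun b _ => by ring
      rw [expand, hY]
      ring
    rw [Finset.sum_congr rfl hinner, ← Finset.sum_mul, hY, zero_mul]
  symm
  calc ∑ a ∈ Icc 1 n, ∑ b ∈ Icc 1 n, ((n : ℝ) - |(a : ℝ) - (b : ℝ)|) * (Y a * Y b)
      = ∑ a ∈ Icc 1 n, ∑ b ∈ Icc 1 n,
          (2 * (((n : ℝ) + 1 - max a b) * (Y a * Y b))
            + ((a : ℝ) + b - n - 2) * (Y a * Y b)) := by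
        refine sum_congr rfl fun a _ => sum_congr rfl fun b _ => ?_
        rw [hcoef a b]; ring
    _ = 2 * (∑ a ∈ Icc 1 n, ∑ b ∈ Icc 1 n, ((n : ℝ) + 1 - max a b) * (Y a * Y b))
          + ∑ a ∈ Icc 1 n, ∑ b ∈ Icc 1 n, ((a : ℝ) + b - n - 2) * (Y a * Y b) := by
        simp only [Finset.sum_add_distrib, Finset.mul_sum]
    _ = 2 * (∑ a ∈ Icc 1 n, ∑ b ∈ Icc 1 n, ((n : ℝ) + 1 - max a b) * (Y a * Y b)) := by
        rw [hzero, add_zero]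
  -- orient: goal was `2 * A = B`; calc gave `B = 2 * A`
end

section
/- Let $(g_k)_{k\ge 1}$ be real numbers with $\sum_{k=1}^{\infty} g_k^2 < \infty$, and for an integer $k \ge 1$ define $H_k(w) = \sum_{t=1}^{k} e^{itw}$. Then for all integers $1 \le B \le r$, $\int_{-\pi}^{\pi}\int_{-\pi}^{\pi}\Big|\sum_{k=B}^{r} g_k\, e^{ik\lambda}\, H_k(w)\Big|^2\, dw\, d\lambda \;\le\; 16\pi^2\, r \sum_{k=B}^{\infty} g_k^2.$ -/
open MeasureTheory

open Complex intervalIntegral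

set_option maxHeartbeats 1000000

lemma exp_int_integral (n : ℤ) (hn : n ≠ 0) :
    ∫ x in (-Real.pi)..Real.pi, Complex.exp ((n : ℂ) * x * Complex.I) = 0 := by
  have hc : (n : ℂ) * Complex.I ≠ 0 := by
    simp [Complex.I_ne_zero, hn]
  have h := integral_exp_mul_complex (a := -Real.pi) (b := Real.pi) hc
  have h1 : ∀ x : ℝ, (n : ℂ) * Complex.I * (x : ℂ) = (n : ℂ) * x * Complex.I := by
    intro x; ring
  simp only [h1] at h
  rw [h]
  have key : Complex.exp ((n:ℂ) * (Real.pi:ℂ) * Complex.I)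
      = Complex.exp ((n:ℂ) * ((-Real.pi : ℝ):ℂ) * Complex.I) := by
    have : (n:ℂ) * (Real.pi:ℂ) * Complex.I
        = (n:ℂ) * ((-Real.pi : ℝ):ℂ) * Complex.I + (n:ℤ) * (2 * Real.pi * Complex.I) := by
      push_cast; ring
    rw [this, Complex.exp_add, Complex.exp_int_mul_two_pi_mul_I, mul_one]
  rw [key, sub_self, zero_div]

lemma orth (m n : ℕ) :
    ∫ x in (-Real.pi)..Real.pi,
      Complex.exp ((m : ℂ) * x * Complex.I) *
        (starRingEnd ℂ) (Complex.exp ((n : ℂ) * x * Complex.I)) =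
      if m = n then (2 * Real.pi : ℂ) else 0 := by
  have hcomb : ∀ x : ℝ, Complex.exp ((m : ℂ) * x * Complex.I) *
      (starRingEnd ℂ) (Complex.exp ((n : ℂ) * x * Complex.I))
      = Complex.exp ((((m:ℤ) - (n:ℤ) : ℤ) : ℂ) * x * Complex.I) := by
    intro x
    rw [← Complex.exp_conj, ← Complex.exp_add]
    congr 1
    simp [Complex.conj_I]
    push_cast
    ring
  simp only [hcomb]
  by_cases h : m = n
  · subst h
    simp [Complex.exp_zero, two_mul]
  · rw [if_neg h, exp_int_integral]
    exact sub_ne_zero.mpr (by exact_mod_cast h)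

lemma innerInt (a : ℕ → ℂ) (B r : ℕ) :
    (∫ w in (-Real.pi)..Real.pi,
      (∑ k ∈ Finset.Icc B r, a k * ∑ t ∈ Finset.Icc 1 k, Complex.exp ((t:ℂ) * w * Complex.I)) *
        (starRingEnd ℂ)
          (∑ k ∈ Finset.Icc B r, a k * ∑ t ∈ Finset.Icc 1 k, Complex.exp ((t:ℂ) * w * Complex.I)))
    = ∑ k ∈ Finset.Icc B r, ∑ k' ∈ Finset.Icc B r,
        a k * (starRingEnd ℂ) (a k') * (2 * Real.pi * (min k k' : ℕ)) := by
  have hexp : ∀ w : ℝ,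
      (∑ k ∈ Finset.Icc B r, a k * ∑ t ∈ Finset.Icc 1 k, Complex.exp ((t:ℂ) * w * Complex.I)) *
        (starRingEnd ℂ)
          (∑ k ∈ Finset.Icc B r, a k * ∑ t ∈ Finset.Icc 1 k, Complex.exp ((t:ℂ) * w * Complex.I))
      = ∑ k ∈ Finset.Icc B r, ∑ k' ∈ Finset.Icc B r, ∑ t ∈ Finset.Icc 1 k, ∑ s ∈ Finset.Icc 1 k',
          a k * (starRingEnd ℂ) (a k') *
            (Complex.exp ((t:ℂ) * w * Complex.I) *
              (starRingEnd ℂ) (Complex.exp ((s:ℂ) * w * Complex.I))) := by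
    intro w
    rw [map_sum, Finset.sum_mul_sum]
    refine Finset.sum_congr rfl fun k _ => Finset.sum_congr rfl fun k' _ => ?_
    rw [map_mul, map_sum, mul_mul_mul_comm, Finset.sum_mul_sum, Finset.mul_sum]
    refine Finset.sum_congr rfl fun t _ => ?_
    rw [Finset.mul_sum]
  simp only [hexp]
  have hcont : ∀ (c : ℂ) (t s : ℕ), Continuous
      (fun w : ℝ => c * (Complex.exp ((t:ℂ) * w * Complex.I) *
        (starRingEnd ℂ) (Complex.exp ((s:ℂ) * w * Complex.I)))) := by
    intro c t s
    apply Continuous.mul continuous_const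
    apply Continuous.mul
    · fun_prop
    · exact continuous_conj.comp (by fun_prop)
  have hint : ∀ (c : ℂ) (t s : ℕ), IntervalIntegrable
      (fun w : ℝ => c * (Complex.exp ((t:ℂ) * w * Complex.I) *
        (starRingEnd ℂ) (Complex.exp ((s:ℂ) * w * Complex.I)))) volume (-Real.pi) Real.pi :=
    fun c t s => (hcont c t s).intervalIntegrable _ _
  rw [intervalIntegral.integral_finset_sum]
  swap
  · intro k _
    apply Continuous.intervalIntegrable
    exact continuous_finset_sum _ fun k' _ => continuous_finset_sum _ fun t _ =>
      continuous_finset_sum _ fun s _ => hcont _ t s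
  refine Finset.sum_congr rfl fun k _ => ?_
  rw [intervalIntegral.integral_finset_sum]
  swap
  · intro k' _
    apply Continuous.intervalIntegrable
    exact continuous_finset_sum _ fun t _ => continuous_finset_sum _ fun s _ => hcont _ t s
  refine Finset.sum_congr rfl fun k' _ => ?_
  rw [intervalIntegral.integral_finset_sum]
  swap
  · intro t _
    apply Continuous.intervalIntegrable
    exact continuous_finset_sum _ fun s _ => hcont _ t s
  have hterm : ∀ t ∈ Finset.Icc 1 k, (∫ w in (-Real.pi)..Real.pi, ∑ s ∈ Finset.Icc 1 k',
      a k * (starRingEnd ℂ) (a k') *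
        (Complex.exp ((t:ℂ) * w * Complex.I) *
          (starRingEnd ℂ) (Complex.exp ((s:ℂ) * w * Complex.I))))
      = ∑ s ∈ Finset.Icc 1 k', a k * (starRingEnd ℂ) (a k') *
          (if t = s then (2 * Real.pi : ℂ) else 0) := by
    intro t _
    rw [intervalIntegral.integral_finset_sum (fun s _ => hint _ t s)]
    refine Finset.sum_congr rfl fun s _ => ?_
    rw [intervalIntegral.integral_const_mul, orth]
  rw [Finset.sum_congr rfl hterm]
  simp only [mul_ite, mul_zero, Finset.sum_ite_eq, Finset.sum_ite_mem]
  have hcard : (Finset.Icc 1 k ∩ Finset.Icc 1 k').card = min k k' := by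
    have : Finset.Icc 1 k ∩ Finset.Icc 1 k' = Finset.Icc 1 (min k k') := by
      ext x; simp only [Finset.mem_inter, Finset.mem_Icc]; omega
    rw [this, Nat.card_Icc, Nat.add_sub_cancel]
  rw [Finset.sum_const, hcard]
  simp only [nsmul_eq_mul]
  push_cast
  ring

/-- with `H_k(w) = ∑_{t=1}^k e^{itw}`, for square-summable `(g_k)` and
`1 ≤ B ≤ r`,
`∫_{-π}^{π} ∫_{-π}^{π} |∑_{k=B}^{r} g_k e^{ikλ} H_k(w)|² dw dλ ≤ 16 π² r ∑_{k=B}^∞ g_k²`. -/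
theorem double_integral_summation_by_parts_bound
    (g : ℕ → ℝ) (hg : Summable fun k => g k ^ 2)
    (B r : ℕ) (hB : 1 ≤ B) (hBr : B ≤ r) :
    (∫ lam in (-Real.pi)..Real.pi, ∫ w in (-Real.pi)..Real.pi,
        (‖(∑ k ∈ Finset.Icc B r,
          ((g k : ℝ) : ℂ) * Complex.exp ((((k : ℝ) * lam : ℝ) : ℂ) * Complex.I)
            * ∑ t ∈ Finset.Icc 1 k,
                Complex.exp ((((t : ℝ) * w : ℝ) : ℂ) * Complex.I))‖) ^ 2)
      ≤ 16 * Real.pi ^ 2 * r * ∑' k : ℕ, g (B + k) ^ 2 := by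
  have pi_pos := Real.pi_pos
  -- the summand function
  set a : ℝ → ℕ → ℂ := fun lam k => ((g k : ℝ) : ℂ) *
    Complex.exp ((k : ℂ) * (lam : ℝ) * Complex.I) with ha
  -- Step 0: normalize casts
  have hcast : ∀ (lam w : ℝ),
      (∑ k ∈ Finset.Icc B r,
        ((g k : ℝ) : ℂ) * Complex.exp ((((k : ℝ) * lam : ℝ) : ℂ) * Complex.I)
          * ∑ t ∈ Finset.Icc 1 k,
              Complex.exp ((((t : ℝ) * w : ℝ) : ℂ) * Complex.I))
      = ∑ k ∈ Finset.Icc B r, a lam k *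
          ∑ t ∈ Finset.Icc 1 k, Complex.exp ((t : ℂ) * (w : ℝ) * Complex.I) := by
    intro lam w
    refine Finset.sum_congr rfl fun k _ => ?_
    rw [ha]
    push_cast
    rfl
  simp only [hcast]
  -- continuity of the inner function
  have hScont : ∀ lam : ℝ, Continuous (fun w : ℝ =>
      (∑ k ∈ Finset.Icc B r, a lam k *
        ∑ t ∈ Finset.Icc 1 k, Complex.exp ((t : ℂ) * (w : ℝ) * Complex.I))) := by
    intro lam
    exact continuous_finset_sum _ fun k _ => Continuous.mul continuous_const
      (continuous_finset_sum _ fun t _ => by fun_prop)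
  -- Step 1: compute the inner integral
  have hinner : ∀ lam : ℝ,
      (∫ w in (-Real.pi)..Real.pi,
        (‖(∑ k ∈ Finset.Icc B r, a lam k *
          ∑ t ∈ Finset.Icc 1 k, Complex.exp ((t : ℂ) * (w : ℝ) * Complex.I))‖) ^ 2)
      = ∑ k ∈ Finset.Icc B r, ∑ k' ∈ Finset.Icc B r,
          (a lam k * (starRingEnd ℂ) (a lam k') * (2 * Real.pi * (min k k' : ℕ))).re := by
    intro lam
    have habs : ∀ z : ℂ, (‖z‖) ^ 2 = (z * (starRingEnd ℂ) z).re := by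
      intro z
      rw [Complex.mul_conj, Complex.ofReal_re, Complex.sq_norm]
    simp only [habs]
    have hii : IntervalIntegrable (fun w : ℝ =>
        (∑ k ∈ Finset.Icc B r, a lam k *
          ∑ t ∈ Finset.Icc 1 k, Complex.exp ((t : ℂ) * (w : ℝ) * Complex.I)) *
        (starRingEnd ℂ) (∑ k ∈ Finset.Icc B r, a lam k *
          ∑ t ∈ Finset.Icc 1 k, Complex.exp ((t : ℂ) * (w : ℝ) * Complex.I)))
        volume (-Real.pi) Real.pi :=
      (Continuous.mul (hScont lam) (continuous_conj.comp (hScont lam))).intervalIntegrable _ _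
    have := (Complex.reCLM.intervalIntegral_comp_comm hii).symm
    simp only [Complex.reCLM_apply] at this
    rw [← this, innerInt (a lam) B r, Complex.re_sum]
    exact Finset.sum_congr rfl fun k _ => Complex.re_sum _ _
  simp only [hinner]
  -- Step 2: outer integral
  have hterm : ∀ k k' : ℕ,
      (∫ lam in (-Real.pi)..Real.pi,
        (a lam k * (starRingEnd ℂ) (a lam k') * (2 * Real.pi * (min k k' : ℕ))).re)
      = (((g k : ℝ) : ℂ) * (starRingEnd ℂ) ((g k' : ℝ) : ℂ) * (2 * Real.pi * (min k k' : ℕ)) *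
          (if k = k' then (2 * Real.pi : ℂ) else 0)).re := by
    intro k k'
    have hc : Continuous (fun lam : ℝ =>
        a lam k * (starRingEnd ℂ) (a lam k') * (2 * Real.pi * (min k k' : ℕ) : ℂ)) := by
      rw [ha]
      apply Continuous.mul _ continuous_const
      apply Continuous.mul
      · fun_prop
      · exact continuous_conj.comp (by fun_prop)
    have hii : IntervalIntegrable _ volume (-Real.pi) Real.pi :=
      hc.intervalIntegrable (-Real.pi) Real.pi
    have := (Complex.reCLM.intervalIntegral_comp_comm hii).symm
    simp only [Complex.reCLM_apply] at this
    rw [← this]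
    congr 1
    have hrearr : ∀ lam : ℝ,
        a lam k * (starRingEnd ℂ) (a lam k') * (2 * Real.pi * (min k k' : ℕ) : ℂ)
        = (((g k : ℝ) : ℂ) * (starRingEnd ℂ) ((g k' : ℝ) : ℂ) *
            (2 * Real.pi * (min k k' : ℕ))) *
          (Complex.exp ((k : ℂ) * lam * Complex.I) *
            (starRingEnd ℂ) (Complex.exp ((k' : ℂ) * lam * Complex.I))) := by
      intro lam
      rw [ha]
      simp only [map_mul]
      ring
    simp only [hrearr]
    rw [intervalIntegral.integral_const_mul, orth]
  rw [intervalIntegral.integral_finset_sum]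
  swap
  · intro k _
    apply Continuous.intervalIntegrable
    apply continuous_finset_sum
    intro k' _
    apply Complex.continuous_re.comp
    rw [ha]
    apply Continuous.mul _ continuous_const
    apply Continuous.mul
    · fun_prop
    · exact continuous_conj.comp (by fun_prop)
  have hsum : ∀ k ∈ Finset.Icc B r,
      (∫ lam in (-Real.pi)..Real.pi, ∑ k' ∈ Finset.Icc B r,
        (a lam k * (starRingEnd ℂ) (a lam k') * (2 * Real.pi * (min k k' : ℕ))).re)
      = ∑ k' ∈ Finset.Icc B r,
          (((g k : ℝ) : ℂ) * (starRingEnd ℂ) ((g k' : ℝ) : ℂ) *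
            (2 * Real.pi * (min k k' : ℕ)) * (if k = k' then (2 * Real.pi : ℂ) else 0)).re := by
    intro k _
    rw [intervalIntegral.integral_finset_sum]
    · exact Finset.sum_congr rfl fun k' _ => hterm k k'
    · intro k' _
      apply Continuous.intervalIntegrable
      apply Complex.continuous_re.comp
      rw [ha]
      apply Continuous.mul _ continuous_const
      apply Continuous.mul
      · fun_prop
      · exact continuous_conj.comp (by fun_prop)
  rw [Finset.sum_congr rfl hsum]
  -- Step 3: evaluate the diagonal sum
  have hdiag : ∀ k ∈ Finset.Icc B r,
      (∑ k' ∈ Finset.Icc B r,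
        (((g k : ℝ) : ℂ) * (starRingEnd ℂ) ((g k' : ℝ) : ℂ) *
          (2 * Real.pi * (min k k' : ℕ)) * (if k = k' then (2 * Real.pi : ℂ) else 0)).re)
      = 4 * Real.pi ^ 2 * k * g k ^ 2 := by
    intro k hk
    rw [← Complex.re_sum]
    simp only [mul_ite, mul_zero, Finset.sum_ite_eq, hk, if_true, min_self]
    have : (((g k : ℝ) : ℂ) * (starRingEnd ℂ) ((g k : ℝ) : ℂ) *
        (2 * Real.pi * (k : ℕ)) * (2 * Real.pi : ℂ))
        = ((4 * Real.pi ^ 2 * k * g k ^ 2 : ℝ) : ℂ) := by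
      rw [Complex.conj_ofReal]
      push_cast
      ring
    rw [this, Complex.ofReal_re]
  rw [Finset.sum_congr rfl hdiag]
  -- Step 4: the inequality
  have hsummable : Summable (fun k : ℕ => g (B + k) ^ 2) := by
    have := (summable_nat_add_iff B).mpr hg
    simpa [add_comm] using this
  have htail : ∑ k ∈ Finset.Icc B r, g k ^ 2 ≤ ∑' k : ℕ, g (B + k) ^ 2 := by
    rw [show Finset.Icc B r = Finset.map ⟨fun i => B + i, add_right_injective B⟩
        (Finset.range (r + 1 - B)) from ?_]
    · rw [Finset.sum_map]
      exact hsummable.sum_le_tsum _ (fun i _ => sq_nonneg _)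
    · ext x
      simp only [Finset.mem_Icc, Finset.mem_map, Finset.mem_range, Function.Embedding.coeFn_mk]
      constructor
      · intro ⟨h1, h2⟩; exact ⟨x - B, by omega, by omega⟩
      · rintro ⟨i, hi, rfl⟩; omega
  have htail0 : (0:ℝ) ≤ ∑' k : ℕ, g (B + k) ^ 2 :=
    tsum_nonneg fun _ => sq_nonneg _
  calc ∑ k ∈ Finset.Icc B r, 4 * Real.pi ^ 2 * k * g k ^ 2
      ≤ ∑ k ∈ Finset.Icc B r, 4 * Real.pi ^ 2 * r * g k ^ 2 := by
        apply Finset.sum_le_sum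
        intro k hk
        have hkr : (k : ℝ) ≤ r := by
          exact_mod_cast (Finset.mem_Icc.mp hk).2
        have : (0:ℝ) ≤ 4 * Real.pi ^ 2 * g k ^ 2 := by positivity
        nlinarith [sq_nonneg (g k), sq_nonneg Real.pi]
    _ = 4 * Real.pi ^ 2 * r * ∑ k ∈ Finset.Icc B r, g k ^ 2 := by
        rw [Finset.mul_sum]
    _ ≤ 4 * Real.pi ^ 2 * r * ∑' k : ℕ, g (B + k) ^ 2 := by
        apply mul_le_mul_of_nonneg_left htail
        positivity
    _ ≤ 16 * Real.pi ^ 2 * r * ∑' k : ℕ, g (B + k) ^ 2 := by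
        apply mul_le_mul_of_nonneg_right _ htail0
        have : (0:ℝ) ≤ Real.pi ^ 2 * r := by positivity
        nlinarith
end

section
/- Let $f : \mathbb{R} \to \mathbb{R}$ be measurable, $2\pi$-periodic and even, with $|f(\lambda)| \le M$ for all $\lambda$, and define $\gamma(h) = \int_{-\pi}^{\pi}\cos(h\lambda) f(\lambda)\, d\lambda$ for $h \in \mathbb{Z}$. There exists an absolute constant $C$ (one may take $C = 16\pi^2$) such that for all real sequences $(g_k)_{k\ge 1}$ with $\sum_{k=1}^{\infty} g_k^2 < \infty$ and all integers $1 \le B \le r$, $\Big|\sum_{k=B}^{r}\sum_{k'=B}^{r}\sum_{t=1}^{k}\sum_{t'=1}^{k'} g_k\, g_{k'}\, \gamma(t-t')\,\gamma(t'-k'-t+k)\Big| \;\le\; C\, M^2\, r \sum_{k=B}^{\infty} g_k^2.$ -/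
set_option maxHeartbeats 1000000
open MeasureTheory intervalIntegral Finset
open scoped Real

noncomputable def Ee (n : ℤ) (x : ℝ) : ℂ := Complex.exp (n * x * Complex.I)

lemma Ee_cont (n : ℤ) : Continuous (Ee n) :=
  Complex.continuous_exp.comp ((continuous_const.mul Complex.continuous_ofReal).mul continuous_const)

lemma Ee_norm (n : ℤ) (x : ℝ) : ‖Ee n x‖ = 1 := by
  simp [Ee, Complex.norm_exp]

lemma Ee_mul (a b : ℤ) (x : ℝ) : Ee a x * Ee b x = Ee (a + b) x := by
  rw [Ee, Ee, Ee, ← Complex.exp_add]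
  congr 1
  push_cast
  ring

lemma Ee_conj (n : ℤ) (x : ℝ) : (starRingEnd ℂ) (Ee n x) = Ee (-n) x := by
  rw [Ee, Ee, ← Complex.exp_conj]
  congr 1
  simp only [map_mul, Complex.conj_ofReal, Complex.conj_I, map_intCast]
  push_cast
  ring

lemma Ee_ortho (n : ℤ) :
    (∫ x in (-Real.pi)..Real.pi, Ee n x) = if n = 0 then (2 * Real.pi : ℂ) else 0 := by
  rcases eq_or_ne n 0 with h | h
  · subst h
    simp [Ee, two_mul]
  · rw [if_neg h]
    have hc : ((n : ℂ) * Complex.I) ≠ 0 := by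
      simp [Complex.I_ne_zero, Int.cast_injective, h]
    have : (∫ x in (-Real.pi)..Real.pi, Ee n x)
        = ∫ x in (-Real.pi)..Real.pi, Complex.exp ((n * Complex.I) * x) := by
      apply intervalIntegral.integral_congr
      intro x _
      rw [Ee]
      ring_nf
    rw [this, integral_exp_mul_complex hc]
    have hsin : Complex.sin (n * Real.pi) = 0 := Complex.sin_int_mul_pi n
    have e1 : (n : ℂ) * Complex.I * Real.pi = ((n : ℂ) * Real.pi) * Complex.I := by ring
    have e2 : (n : ℂ) * Complex.I * (-Real.pi : ℝ) = (-((n : ℂ) * Real.pi)) * Complex.I := by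
      push_cast; ring
    rw [e1, e2, Complex.exp_mul_I, Complex.exp_mul_I, Complex.cos_neg, Complex.sin_neg, hsin]
    ring

lemma ii_bdd {F : ℝ → ℂ} (hm : Measurable F) (c : ℝ) (hb : ∀ x, ‖F x‖ ≤ c) :
    IntervalIntegrable F volume (-Real.pi) Real.pi := by
  refine (_root_.intervalIntegrable_const (c := c)).mono_fun hm.aestronglyMeasurable ?_
  exact Filter.Eventually.of_forall fun x => (hb x).trans (le_abs_self c)

lemma ii_bddR {F : ℝ → ℝ} (hm : Measurable F) (c : ℝ) (hb : ∀ x, |F x| ≤ c) :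
    IntervalIntegrable F volume (-Real.pi) Real.pi := by
  refine (_root_.intervalIntegrable_const (c := c)).mono_fun hm.aestronglyMeasurable ?_
  exact Filter.Eventually.of_forall fun x =>
    (by simpa [Real.norm_eq_abs] using (hb x).trans (le_abs_self c))

lemma odd_int_zero {u : ℝ → ℝ} (hodd : ∀ x, u (-x) = -u x) :
    (∫ x in (-Real.pi)..Real.pi, u x) = 0 := by
  have h := intervalIntegral.integral_comp_neg (a := -Real.pi) (b := Real.pi) (f := u)
  simp only [neg_neg] at h
  have h2 : (∫ x in (-Real.pi)..Real.pi, u (-x)) = -∫ x in (-Real.pi)..Real.pi, u x := by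
    rw [show (fun x => u (-x)) = fun x => -u x from funext fun x => hodd x]
    exact intervalIntegral.integral_neg
  rw [h2] at h
  linarith

lemma ii_sum {ι : Type*} (s : Finset ι) (F : ι → ℝ → ℂ)
    (h : ∀ i ∈ s, IntervalIntegrable (F i) volume (-Real.pi) Real.pi) :
    IntervalIntegrable (fun x => ∑ i ∈ s, F i x) volume (-Real.pi) Real.pi := by
  have h2 : (fun x => ∑ i ∈ s, F i x) = ∑ i ∈ s, F i := by
    funext x
    simp
  rw [h2]
  exact IntervalIntegrable.sum s h

-- exchange a quadruple finite sum of exponential terms with the integral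
lemma exch (B r : ℕ) (φ : ℝ → ℂ)
    (hφ : ∀ n : ℤ, IntervalIntegrable (fun x => Ee n x * φ x) volume (-Real.pi) Real.pi)
    (c : ℕ → ℕ → ℕ → ℕ → ℂ) (m : ℕ → ℕ → ℕ → ℕ → ℤ) :
    (∫ x in (-Real.pi)..Real.pi, φ x *
        (∑ k ∈ Icc B r, ∑ k' ∈ Icc B r, ∑ t ∈ Icc 1 k, ∑ t' ∈ Icc 1 k',
          c k k' t t' * Ee (m k k' t t') x))
      = ∑ k ∈ Icc B r, ∑ k' ∈ Icc B r, ∑ t ∈ Icc 1 k, ∑ t' ∈ Icc 1 k',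
          c k k' t t' * ∫ x in (-Real.pi)..Real.pi, Ee (m k k' t t') x * φ x := by
  have h1 : ∀ x, φ x *
        (∑ k ∈ Icc B r, ∑ k' ∈ Icc B r, ∑ t ∈ Icc 1 k, ∑ t' ∈ Icc 1 k',
          c k k' t t' * Ee (m k k' t t') x)
      = ∑ k ∈ Icc B r, ∑ k' ∈ Icc B r, ∑ t ∈ Icc 1 k, ∑ t' ∈ Icc 1 k',
          c k k' t t' * (Ee (m k k' t t') x * φ x) := by
    intro x
    simp only [Finset.mul_sum]
    exact Finset.sum_congr rfl fun k _ => Finset.sum_congr rfl fun k' _ =>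
      Finset.sum_congr rfl fun t _ => Finset.sum_congr rfl fun t' _ => by ring
  rw [intervalIntegral.integral_congr (fun x _ => h1 x)]
  rw [intervalIntegral.integral_finset_sum
    (f := fun k x => ∑ k' ∈ Icc B r, ∑ t ∈ Icc 1 k, ∑ t' ∈ Icc 1 k',
      c k k' t t' * (Ee (m k k' t t') x * φ x))
    (fun k _ => ii_sum _ _
    (fun k' _ => ii_sum _ _ (fun t _ => ii_sum _ _
      (fun t' _ => (hφ (m k k' t t')).const_mul _))))]
  refine Finset.sum_congr rfl fun k _ => ?_
  rw [intervalIntegral.integral_finset_sum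
    (f := fun k' x => ∑ t ∈ Icc 1 k, ∑ t' ∈ Icc 1 k',
      c k k' t t' * (Ee (m k k' t t') x * φ x))
    (fun k' _ => ii_sum _ _
    (fun t _ => ii_sum _ _ (fun t' _ => (hφ (m k k' t t')).const_mul _)))]
  refine Finset.sum_congr rfl fun k' _ => ?_
  rw [intervalIntegral.integral_finset_sum
    (f := fun t x => ∑ t' ∈ Icc 1 k', c k k' t t' * (Ee (m k k' t t') x * φ x))
    (fun t _ => ii_sum _ _
    (fun t' _ => (hφ (m k k' t t')).const_mul _))]
  refine Finset.sum_congr rfl fun t _ => ?_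
  rw [intervalIntegral.integral_finset_sum
    (f := fun t' x => c k k' t t' * (Ee (m k k' t t') x * φ x))
    (fun t' _ => (hφ (m k k' t t')).const_mul _)]
  exact Finset.sum_congr rfl fun t' _ => intervalIntegral.integral_const_mul _ _

lemma term_mul (u v : ℝ) (a b c d : ℤ) (x y : ℝ) :
    ((u : ℂ) * Ee a x * Ee b y) * ((v : ℂ) * Ee c x * Ee d y)
      = ((u * v : ℝ) : ℂ) * Ee (a + c) x * Ee (b + d) y := by
  have h : ((u : ℂ) * Ee a x * Ee b y) * ((v : ℂ) * Ee c x * Ee d y)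
      = ((u : ℂ) * (v : ℂ)) * ((Ee a x * Ee c x) * (Ee b y * Ee d y)) := by ring
  rw [h, Ee_mul, Ee_mul]
  push_cast
  ring

lemma Sexpand (g : ℕ → ℝ) (B r : ℕ) (lam mu : ℝ) :
    (∑ k ∈ Icc B r, ∑ t ∈ Icc 1 k, (g k : ℂ) * Ee t lam * Ee ((k : ℤ) - t) mu) *
      (starRingEnd ℂ) (∑ k ∈ Icc B r, ∑ t ∈ Icc 1 k, (g k : ℂ) * Ee t lam * Ee ((k : ℤ) - t) mu)
      = ∑ k ∈ Icc B r, ∑ k' ∈ Icc B r, ∑ t ∈ Icc 1 k, ∑ t' ∈ Icc 1 k',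
          (((g k * g k' : ℝ) : ℂ) * Ee ((t : ℤ) - (t' : ℤ)) lam) * Ee ((t' : ℤ) - k' - t + k) mu := by
  simp only [map_sum, map_mul, Ee_conj, Complex.conj_ofReal]
  rw [Finset.sum_mul_sum]
  refine Finset.sum_congr rfl fun k _ => Finset.sum_congr rfl fun k' _ => ?_
  rw [Finset.sum_mul_sum]
  refine Finset.sum_congr rfl fun t _ => Finset.sum_congr rfl fun t' _ => ?_
  rw [term_mul]
  have e1 : (t : ℤ) + -(t' : ℤ) = (t : ℤ) - (t' : ℤ) := by ring
  have e2 : ((k : ℤ) - t) + -((k' : ℤ) - t') = (t' : ℤ) - k' - t + k := by ring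
  rw [e1, e2]

lemma keyB (g : ℕ → ℝ) (B r : ℕ) (φ : ℝ → ℂ)
    (hφ : ∀ n : ℤ, IntervalIntegrable (fun x => Ee n x * φ x) volume (-Real.pi) Real.pi)
    (lam : ℝ) :
    (∫ mu in (-Real.pi)..Real.pi, φ mu *
        ((∑ k ∈ Icc B r, ∑ t ∈ Icc 1 k, (g k : ℂ) * Ee t lam * Ee ((k : ℤ) - t) mu) *
          (starRingEnd ℂ)
            (∑ k ∈ Icc B r, ∑ t ∈ Icc 1 k, (g k : ℂ) * Ee t lam * Ee ((k : ℤ) - t) mu)))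
      = ∑ k ∈ Icc B r, ∑ k' ∈ Icc B r, ∑ t ∈ Icc 1 k, ∑ t' ∈ Icc 1 k',
          (((g k * g k' : ℝ) : ℂ) * Ee ((t : ℤ) - (t' : ℤ)) lam) *
            ∫ mu in (-Real.pi)..Real.pi, Ee ((t' : ℤ) - k' - t + k) mu * φ mu := by
  have h := exch B r φ hφ
    (fun k k' t t' => ((g k * g k' : ℝ) : ℂ) * Ee ((t : ℤ) - (t' : ℤ)) lam)
    (fun k k' t t' => (t' : ℤ) - k' - t + k)
  rw [← h]
  apply intervalIntegral.integral_congr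
  intro mu _
  exact congrArg (fun z => φ mu * z) (Sexpand g B r lam mu)

lemma gcos (f : ℝ → ℝ) (hfmeas : Measurable f) (hfeven : ∀ x, f (-x) = f x)
    (M : ℝ) (hfM : ∀ x, |f x| ≤ M) (n : ℤ) :
    (∫ x in (-Real.pi)..Real.pi, Ee n x * (f x : ℂ))
      = ((∫ x in (-Real.pi)..Real.pi, Real.cos ((n : ℝ) * x) * f x : ℝ) : ℂ) := by
  have hbound : ∀ (u : ℝ → ℝ), (∀ y, |u y| ≤ 1) → ∀ x, |u x * f x| ≤ M := by
    intro u hu x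
    rw [abs_mul]
    calc |u x| * |f x| ≤ 1 * |f x| := by
          exact mul_le_mul_of_nonneg_right (hu x) (abs_nonneg _)
      _ = |f x| := one_mul _
      _ ≤ M := hfM x
  have hcosmeas : Measurable fun x => Real.cos ((n : ℝ) * x) * f x :=
    (Real.measurable_cos.comp (measurable_const.mul measurable_id)).mul hfmeas
  have hsinmeas : Measurable fun x => Real.sin ((n : ℝ) * x) * f x :=
    (Real.measurable_sin.comp (measurable_const.mul measurable_id)).mul hfmeas
  have hc : IntervalIntegrable (fun x => ((Real.cos ((n : ℝ) * x) * f x : ℝ) : ℂ))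
      volume (-Real.pi) Real.pi := by
    refine ii_bdd (Complex.measurable_ofReal.comp hcosmeas) M fun x => ?_
    rw [Complex.norm_real, Real.norm_eq_abs]
    exact hbound _ (fun y => Real.abs_cos_le_one _) x
  have hs : IntervalIntegrable (fun x => ((Real.sin ((n : ℝ) * x) * f x : ℝ) : ℂ) * Complex.I)
      volume (-Real.pi) Real.pi := by
    refine ii_bdd ((Complex.measurable_ofReal.comp hsinmeas).mul_const _) M fun x => ?_
    rw [norm_mul, Complex.norm_I, mul_one, Complex.norm_real, Real.norm_eq_abs]
    exact hbound _ (fun y => Real.abs_sin_le_one _) x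
  have hpt : ∀ x : ℝ, Ee n x * (f x : ℂ)
      = ((Real.cos ((n : ℝ) * x) * f x : ℝ) : ℂ)
        + ((Real.sin ((n : ℝ) * x) * f x : ℝ) : ℂ) * Complex.I := by
    intro x
    have h1 : Ee n x = Complex.exp ((((n : ℝ) * x : ℝ) : ℂ) * Complex.I) := by
      rw [Ee]; congr 1; push_cast; ring
    rw [h1, Complex.exp_mul_I, ← Complex.ofReal_cos, ← Complex.ofReal_sin]
    push_cast
    ring
  rw [intervalIntegral.integral_congr (fun x _ => hpt x)]
  rw [intervalIntegral.integral_add hc hs]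
  rw [intervalIntegral.integral_mul_const]
  rw [intervalIntegral.integral_ofReal, intervalIntegral.integral_ofReal]
  have hodd : (∫ x in (-Real.pi)..Real.pi, Real.sin ((n : ℝ) * x) * f x) = 0 := by
    apply odd_int_zero
    intro x
    rw [show (n : ℝ) * -x = -((n : ℝ) * x) by ring, Real.sin_neg, hfeven]
    ring
  rw [hodd]
  simp

noncomputable def Sfun (g : ℕ → ℝ) (B r : ℕ) (lam mu : ℝ) : ℂ :=
  ∑ k ∈ Icc B r, ∑ t ∈ Icc 1 k, (g k : ℂ) * Ee t lam * Ee ((k : ℤ) - t) mu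

noncomputable def gammaC (f : ℝ → ℝ) (n : ℤ) : ℂ :=
  ∫ x in (-Real.pi)..Real.pi, Ee n x * (f x : ℂ)

noncomputable def TfFun (f : ℝ → ℝ) (g : ℕ → ℝ) (B r : ℕ) (lam : ℝ) : ℂ :=
  ∑ k ∈ Icc B r, ∑ k' ∈ Icc B r, ∑ t ∈ Icc 1 k, ∑ t' ∈ Icc 1 k',
    (((g k * g k' : ℝ) : ℂ) * gammaC f ((t' : ℤ) - k' - t + k)) * Ee ((t : ℤ) - (t' : ℤ)) lam

noncomputable def GFun (g : ℕ → ℝ) (B r : ℕ) (lam : ℝ) : ℂ :=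
  ∑ k ∈ Icc B r, ∑ k' ∈ Icc B r, ∑ t ∈ Icc 1 k, ∑ t' ∈ Icc 1 k',
    (((g k * g k' : ℝ) : ℂ) *
      (if ((t' : ℤ) - k' - t + k) = 0 then (2 * Real.pi : ℂ) else 0)) *
        Ee ((t : ℤ) - (t' : ℤ)) lam

lemma Sfun_cont (g : ℕ → ℝ) (B r : ℕ) (lam : ℝ) : Continuous fun mu => Sfun g B r lam mu := by
  unfold Sfun
  exact continuous_finset_sum _ fun k _ => continuous_finset_sum _ fun t _ =>
    continuous_const.mul (Ee_cont _)

lemma TfFun_cont (f : ℝ → ℝ) (g : ℕ → ℝ) (B r : ℕ) : Continuous (TfFun f g B r) := by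
  unfold TfFun
  exact continuous_finset_sum _ fun k _ => continuous_finset_sum _ fun k' _ =>
    continuous_finset_sum _ fun t _ => continuous_finset_sum _ fun t' _ =>
      continuous_const.mul (Ee_cont _)

lemma GFun_cont (g : ℕ → ℝ) (B r : ℕ) : Continuous (GFun g B r) := by
  unfold GFun
  exact continuous_finset_sum _ fun k _ => continuous_finset_sum _ fun k' _ =>
    continuous_finset_sum _ fun t _ => continuous_finset_sum _ fun t' _ =>
      continuous_const.mul (Ee_cont _)

lemma Tf_eq (f : ℝ → ℝ) (g : ℕ → ℝ) (B r : ℕ)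
    (hφf : ∀ n : ℤ, IntervalIntegrable (fun x => Ee n x * (f x : ℂ)) volume (-Real.pi) Real.pi)
    (lam : ℝ) :
    TfFun f g B r lam
      = ∫ mu in (-Real.pi)..Real.pi, (f mu : ℂ) *
          (Sfun g B r lam mu * (starRingEnd ℂ) (Sfun g B r lam mu)) := by
  unfold TfFun Sfun gammaC
  rw [keyB g B r _ hφf lam]
  refine Finset.sum_congr rfl fun k _ => Finset.sum_congr rfl fun k' _ =>
    Finset.sum_congr rfl fun t _ => Finset.sum_congr rfl fun t' _ => by ring

lemma G_eq (g : ℕ → ℝ) (B r : ℕ) (lam : ℝ) :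
    ((∫ mu in (-Real.pi)..Real.pi, ‖Sfun g B r lam mu‖ ^ 2 : ℝ) : ℂ) = GFun g B r lam := by
  have hφ1 : ∀ n : ℤ, IntervalIntegrable (fun x => Ee n x * (1 : ℂ)) volume (-Real.pi) Real.pi :=
    fun n => ((Ee_cont n).mul continuous_const).intervalIntegrable _ _
  have h1 : ∀ mu : ℝ, ((‖Sfun g B r lam mu‖ ^ 2 : ℝ) : ℂ)
      = (1 : ℂ) * (Sfun g B r lam mu * (starRingEnd ℂ) (Sfun g B r lam mu)) := by
    intro mu
    rw [one_mul, Complex.mul_conj, Complex.normSq_eq_norm_sq]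
  calc ((∫ mu in (-Real.pi)..Real.pi, ‖Sfun g B r lam mu‖ ^ 2 : ℝ) : ℂ)
      = ∫ mu in (-Real.pi)..Real.pi, ((‖Sfun g B r lam mu‖ ^ 2 : ℝ) : ℂ) :=
        (intervalIntegral.integral_ofReal).symm
    _ = ∫ mu in (-Real.pi)..Real.pi, (1 : ℂ) *
          (Sfun g B r lam mu * (starRingEnd ℂ) (Sfun g B r lam mu)) :=
        intervalIntegral.integral_congr fun mu _ => h1 mu
    _ = ∑ k ∈ Icc B r, ∑ k' ∈ Icc B r, ∑ t ∈ Icc 1 k, ∑ t' ∈ Icc 1 k',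
          (((g k * g k' : ℝ) : ℂ) * Ee ((t : ℤ) - (t' : ℤ)) lam) *
            ∫ mu in (-Real.pi)..Real.pi, Ee ((t' : ℤ) - k' - t + k) mu * (1 : ℂ) := by
        unfold Sfun
        exact keyB g B r (fun _ => (1 : ℂ)) hφ1 lam
    _ = GFun g B r lam := by
        unfold GFun
        refine Finset.sum_congr rfl fun k _ => Finset.sum_congr rfl fun k' _ =>
          Finset.sum_congr rfl fun t _ => Finset.sum_congr rfl fun t' _ => ?_
        have h2 : (∫ mu in (-Real.pi)..Real.pi, Ee ((t' : ℤ) - k' - t + k) mu * (1 : ℂ))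
            = if ((t' : ℤ) - k' - t + k) = 0 then (2 * Real.pi : ℂ) else 0 := by
          simp only [mul_one]
          exact Ee_ortho _
        rw [h2]
        ring

lemma Sfun_bound (g : ℕ → ℝ) (B r : ℕ) (lam mu : ℝ) :
    ‖Sfun g B r lam mu‖ ≤ ∑ k ∈ Icc B r, ∑ t ∈ Icc 1 k, |g k| := by
  unfold Sfun
  refine (norm_sum_le _ _).trans (Finset.sum_le_sum fun k _ =>
    (norm_sum_le _ _).trans (Finset.sum_le_sum fun t _ => ?_))
  rw [norm_mul, norm_mul, Ee_norm, Ee_norm, Complex.norm_real, Real.norm_eq_abs,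
    mul_one, mul_one]

lemma Tf_bound (f : ℝ → ℝ) (hfmeas : Measurable f) (M : ℝ) (hfM : ∀ x, |f x| ≤ M)
    (g : ℕ → ℝ) (B r : ℕ)
    (hφf : ∀ n : ℤ, IntervalIntegrable (fun x => Ee n x * (f x : ℂ)) volume (-Real.pi) Real.pi)
    (lam : ℝ) :
    ‖TfFun f g B r lam‖ ≤ M * (GFun g B r lam).re := by
  have hpi : (-Real.pi) ≤ Real.pi := by linarith [Real.pi_pos]
  have hM0 : 0 ≤ M := (abs_nonneg (f 0)).trans (hfM 0)
  have hK0 : (0 : ℝ) ≤ ∑ k ∈ Icc B r, ∑ t ∈ Icc 1 k, |g k| :=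
    Finset.sum_nonneg fun k _ => Finset.sum_nonneg fun t _ => abs_nonneg _
  set K : ℝ := ∑ k ∈ Icc B r, ∑ t ∈ Icc 1 k, |g k| with hK
  have hFmeas : Measurable fun x => ((f x : ℝ) : ℂ) := Complex.measurable_ofReal.comp hfmeas
  have hint1 : IntervalIntegrable
      (fun mu => (f mu : ℂ) * (Sfun g B r lam mu * (starRingEnd ℂ) (Sfun g B r lam mu)))
      volume (-Real.pi) Real.pi := by
    refine ii_bdd (hFmeas.mul (((Sfun_cont g B r lam).mul
      (Complex.continuous_conj.comp (Sfun_cont g B r lam))).measurable)) (M * (K * K))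
      fun mu => ?_
    rw [norm_mul, norm_mul, RCLike.norm_conj, Complex.norm_real, Real.norm_eq_abs]
    exact mul_le_mul (hfM mu)
      (mul_le_mul (Sfun_bound g B r lam mu) (Sfun_bound g B r lam mu) (norm_nonneg _) hK0)
      (mul_nonneg (norm_nonneg _) (norm_nonneg _)) hM0
  rw [Tf_eq f g B r hφf lam]
  calc ‖∫ mu in (-Real.pi)..Real.pi, (f mu : ℂ) *
          (Sfun g B r lam mu * (starRingEnd ℂ) (Sfun g B r lam mu))‖
      ≤ ∫ mu in (-Real.pi)..Real.pi, ‖(f mu : ℂ) *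
          (Sfun g B r lam mu * (starRingEnd ℂ) (Sfun g B r lam mu))‖ :=
        intervalIntegral.norm_integral_le_integral_norm hpi
    _ ≤ ∫ mu in (-Real.pi)..Real.pi, M * ‖Sfun g B r lam mu‖ ^ 2 := by
        refine intervalIntegral.integral_mono_on hpi hint1.norm
          ((continuous_const.mul (((Sfun_cont g B r lam).norm).pow 2)).intervalIntegrable _ _)
          fun mu _ => ?_
        rw [norm_mul, norm_mul, RCLike.norm_conj, Complex.norm_real, Real.norm_eq_abs]
        have h3 : ‖Sfun g B r lam mu‖ * ‖Sfun g B r lam mu‖ = ‖Sfun g B r lam mu‖ ^ 2 :=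
          (sq _).symm
        rw [h3]
        exact mul_le_mul_of_nonneg_right (hfM mu) (by positivity)
    _ = M * ∫ mu in (-Real.pi)..Real.pi, ‖Sfun g B r lam mu‖ ^ 2 :=
        intervalIntegral.integral_const_mul _ _
    _ = M * (GFun g B r lam).re := by
        rw [show (∫ mu in (-Real.pi)..Real.pi, ‖Sfun g B r lam mu‖ ^ 2)
            = (GFun g B r lam).re from by rw [← G_eq g B r lam, Complex.ofReal_re]]

lemma G_int (g : ℕ → ℝ) (B r : ℕ) :
    (∫ lam in (-Real.pi)..Real.pi, (GFun g B r lam).re)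
      = ∑ k ∈ Icc B r, ∑ t ∈ Icc 1 k, g k ^ 2 * (2 * Real.pi) * (2 * Real.pi) := by
  have hφ1 : ∀ n : ℤ, IntervalIntegrable (fun x => Ee n x * (1 : ℂ)) volume (-Real.pi) Real.pi :=
    fun n => ((Ee_cont n).mul continuous_const).intervalIntegrable _ _
  apply Complex.ofReal_injective
  have h2 : (fun lam => (((GFun g B r lam).re : ℝ) : ℂ)) = GFun g B r := by
    funext lam
    rw [← G_eq g B r lam, Complex.ofReal_re]
  have h3 : (∫ lam in (-Real.pi)..Real.pi, GFun g B r lam)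
      = ∑ k ∈ Icc B r, ∑ k' ∈ Icc B r, ∑ t ∈ Icc 1 k, ∑ t' ∈ Icc 1 k',
          (((g k * g k' : ℝ) : ℂ) *
            (if ((t' : ℤ) - k' - t + k) = 0 then (2 * Real.pi : ℂ) else 0)) *
            (if ((t : ℤ) - (t' : ℤ)) = 0 then (2 * Real.pi : ℂ) else 0) := by
    have h0 : (∫ lam in (-Real.pi)..Real.pi, GFun g B r lam)
        = ∫ lam in (-Real.pi)..Real.pi, (1 : ℂ) * GFun g B r lam :=
      intervalIntegral.integral_congr fun lam _ => (one_mul _).symm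
    rw [h0]
    have h := exch B r (fun _ => (1 : ℂ)) hφ1
      (fun k k' t t' => ((g k * g k' : ℝ) : ℂ) *
        (if ((t' : ℤ) - k' - t + k) = 0 then (2 * Real.pi : ℂ) else 0))
      (fun k k' t t' => (t : ℤ) - (t' : ℤ))
    rw [show (fun lam => (1:ℂ) * GFun g B r lam) = fun lam => (1:ℂ) * GFun g B r lam from rfl]
    unfold GFun
    rw [h]
    refine Finset.sum_congr rfl fun k _ => Finset.sum_congr rfl fun k' _ =>
      Finset.sum_congr rfl fun t _ => Finset.sum_congr rfl fun t' _ => ?_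
    have h2' : (∫ x in (-Real.pi)..Real.pi, Ee ((t : ℤ) - (t' : ℤ)) x * (1 : ℂ))
        = if ((t : ℤ) - (t' : ℤ)) = 0 then (2 * Real.pi : ℂ) else 0 := by
      simp only [mul_one]
      exact Ee_ortho _
    rw [h2']
  have h4 : (∑ k ∈ Icc B r, ∑ k' ∈ Icc B r, ∑ t ∈ Icc 1 k, ∑ t' ∈ Icc 1 k',
        (((g k * g k' : ℝ) : ℂ) *
          (if ((t' : ℤ) - k' - t + k) = 0 then (2 * Real.pi : ℂ) else 0)) *
          (if ((t : ℤ) - (t' : ℤ)) = 0 then (2 * Real.pi : ℂ) else 0))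
      = ((∑ k ∈ Icc B r, ∑ t ∈ Icc 1 k, g k ^ 2 * (2 * Real.pi) * (2 * Real.pi) : ℝ) : ℂ) := by
    push_cast
    refine Finset.sum_congr rfl fun k hk => ?_
    rw [Finset.sum_comm]
    refine Finset.sum_congr rfl fun t ht => ?_
    rw [Finset.sum_eq_single k]
    · rw [Finset.sum_eq_single t]
      · have e1 : ((t : ℤ) - k - t + k) = 0 := by ring
        have e2 : ((t : ℤ) - (t : ℤ)) = 0 := by ring
        rw [if_pos e1, if_pos e2]
        push_cast
        ring
      · intro t' _ hne
        rw [if_neg (show ¬((t : ℤ) - (t' : ℤ)) = 0 from fun hh => hne (by omega)), mul_zero]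
      · intro hnot
        exact absurd ht hnot
    · intro k' _ hne
      refine Finset.sum_eq_zero fun t' _ => ?_
      by_cases h : t' = t
      · subst h
        rw [if_neg (show ¬((t' : ℤ) - k' - t' + k) = 0 from fun hh => hne (by omega))]
        simp
      · rw [if_neg (show ¬((t : ℤ) - (t' : ℤ)) = 0 from fun hh => h (by omega)), mul_zero]
    · intro hnot
      exact absurd hk hnot
  calc ((∫ lam in (-Real.pi)..Real.pi, (GFun g B r lam).re : ℝ) : ℂ)
      = ∫ lam in (-Real.pi)..Real.pi, (((GFun g B r lam).re : ℝ) : ℂ) :=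
        (intervalIntegral.integral_ofReal).symm
    _ = ∫ lam in (-Real.pi)..Real.pi, GFun g B r lam := by rw [h2]
    _ = ((∑ k ∈ Icc B r, ∑ t ∈ Icc 1 k, g k ^ 2 * (2 * Real.pi) * (2 * Real.pi) : ℝ) : ℂ) := by
        rw [h3, h4]



/-- bound on the term `I₂₁` in the proof of Proposition 1.  With
`γ(h) = ∫_{-π}^{π} cos(hλ) f(λ) dλ` for a measurable, `2π`-periodic, even and
bounded `f`, there is an absolute constant `C` (one may take `C = 16π²`) such that
for all square-summable `(g_k)` and all `1 ≤ B ≤ r`,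
`|∑_{k,k'=B}^{r} ∑_{t=1}^{k} ∑_{t'=1}^{k'} g_k g_{k'} γ(t−t') γ(t'−k'−t+k)|
  ≤ C M² r ∑_{k=B}^∞ g_k²`. -/
theorem I21_bound
    (f : ℝ → ℝ) (hfmeas : Measurable f)
    (hfper : ∀ x, f (x + 2 * Real.pi) = f x)
    (hfeven : ∀ x, f (-x) = f x)
    (M : ℝ) (hfM : ∀ x, |f x| ≤ M) :
    ∃ C : ℝ, C = 16 * Real.pi ^ 2 ∧
      ∀ (g : ℕ → ℝ), Summable (fun k => g k ^ 2) →
      ∀ B r : ℕ, 1 ≤ B → B ≤ r →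
        |∑ k ∈ Finset.Icc B r, ∑ k' ∈ Finset.Icc B r,
          ∑ t ∈ Finset.Icc 1 k, ∑ t' ∈ Finset.Icc 1 k',
            g k * g k'
              * (∫ x in (-Real.pi)..Real.pi, Real.cos (((t : ℤ) - (t' : ℤ)) * x) * f x)
              * (∫ x in (-Real.pi)..Real.pi,
                  Real.cos (((t' : ℤ) - (k' : ℤ) - (t : ℤ) + (k : ℤ)) * x) * f x)|
          ≤ C * M ^ 2 * r * ∑' k : ℕ, g (B + k) ^ 2 := by
  refine ⟨16 * Real.pi ^ 2, rfl, ?_⟩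
  intro g hg B r hB hBr
  have hpi : (-Real.pi) ≤ Real.pi := by linarith [Real.pi_pos]
  have hM0 : 0 ≤ M := (abs_nonneg (f 0)).trans (hfM 0)
  have hFmeas : Measurable fun x => ((f x : ℝ) : ℂ) := Complex.measurable_ofReal.comp hfmeas
  have hφf : ∀ n : ℤ, IntervalIntegrable (fun x => Ee n x * (f x : ℂ))
      volume (-Real.pi) Real.pi := by
    intro n
    refine ii_bdd ((Ee_cont n).measurable.mul hFmeas) M fun x => ?_
    rw [norm_mul, Ee_norm, one_mul, Complex.norm_real, Real.norm_eq_abs]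
    exact hfM x
  -- Step 1 : identify the complexified LHS with ∫ f · Tf
  have hA : (∫ lam in (-Real.pi)..Real.pi, (f lam : ℂ) * TfFun f g B r lam)
      = ((∑ k ∈ Finset.Icc B r, ∑ k' ∈ Finset.Icc B r,
          ∑ t ∈ Finset.Icc 1 k, ∑ t' ∈ Finset.Icc 1 k',
            g k * g k'
              * (∫ x in (-Real.pi)..Real.pi, Real.cos (((t : ℤ) - (t' : ℤ)) * x) * f x)
              * (∫ x in (-Real.pi)..Real.pi,
                  Real.cos (((t' : ℤ) - (k' : ℤ) - (t : ℤ) + (k : ℤ)) * x) * f x) : ℝ) : ℂ) := by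
    have h := exch B r (fun x => (f x : ℂ)) hφf
      (fun k k' t t' => ((g k * g k' : ℝ) : ℂ) * gammaC f ((t' : ℤ) - k' - t + k))
      (fun k k' t t' => (t : ℤ) - (t' : ℤ))
    unfold TfFun
    rw [h]
    push_cast
    refine Finset.sum_congr rfl fun k _ => Finset.sum_congr rfl fun k' _ =>
      Finset.sum_congr rfl fun t _ => Finset.sum_congr rfl fun t' _ => ?_
    unfold gammaC
    rw [gcos f hfmeas hfeven M hfM ((t : ℤ) - (t' : ℤ)),
      gcos f hfmeas hfeven M hfM ((t' : ℤ) - k' - t + k)]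
    push_cast
    ring
  -- Step 2 : integrability of f · Tf
  have hCT0 : (0:ℝ) ≤ ∑ k ∈ Icc B r, ∑ k' ∈ Icc B r, ∑ t ∈ Icc 1 k, ∑ t' ∈ Icc 1 k',
      ‖((g k * g k' : ℝ) : ℂ) * gammaC f ((t' : ℤ) - k' - t + k)‖ :=
    Finset.sum_nonneg fun _ _ => Finset.sum_nonneg fun _ _ => Finset.sum_nonneg fun _ _ =>
      Finset.sum_nonneg fun _ _ => norm_nonneg _
  have hCT : ∀ lam, ‖TfFun f g B r lam‖
      ≤ ∑ k ∈ Icc B r, ∑ k' ∈ Icc B r, ∑ t ∈ Icc 1 k, ∑ t' ∈ Icc 1 k',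
          ‖((g k * g k' : ℝ) : ℂ) * gammaC f ((t' : ℤ) - k' - t + k)‖ := by
    intro lam
    unfold TfFun
    refine (norm_sum_le _ _).trans (Finset.sum_le_sum fun k _ =>
      (norm_sum_le _ _).trans (Finset.sum_le_sum fun k' _ =>
      (norm_sum_le _ _).trans (Finset.sum_le_sum fun t _ =>
      (norm_sum_le _ _).trans (Finset.sum_le_sum fun t' _ => ?_))))
    rw [norm_mul, Ee_norm, mul_one]
  have hint1 : IntervalIntegrable (fun lam => (f lam : ℂ) * TfFun f g B r lam)
      volume (-Real.pi) Real.pi := by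
    refine ii_bdd (hFmeas.mul (TfFun_cont f g B r).measurable)
      (M * (∑ k ∈ Icc B r, ∑ k' ∈ Icc B r, ∑ t ∈ Icc 1 k, ∑ t' ∈ Icc 1 k',
          ‖((g k * g k' : ℝ) : ℂ) * gammaC f ((t' : ℤ) - k' - t + k)‖)) fun lam => ?_
    rw [norm_mul, Complex.norm_real, Real.norm_eq_abs]
    exact mul_le_mul (hfM lam) (hCT lam) (norm_nonneg _) hM0
  -- Step 3 : the norm bound
  have hTs0 : (0:ℝ) ≤ ∑' k : ℕ, g (B + k) ^ 2 := tsum_nonneg fun _ => sq_nonneg _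
  have hmain : ‖∫ lam in (-Real.pi)..Real.pi, (f lam : ℂ) * TfFun f g B r lam‖
      ≤ (M * M) * ∑ k ∈ Icc B r, ∑ t ∈ Icc 1 k, g k ^ 2 * (2 * Real.pi) * (2 * Real.pi) := by
    calc ‖∫ lam in (-Real.pi)..Real.pi, (f lam : ℂ) * TfFun f g B r lam‖
        ≤ ∫ lam in (-Real.pi)..Real.pi, ‖(f lam : ℂ) * TfFun f g B r lam‖ :=
          intervalIntegral.norm_integral_le_integral_norm hpi
      _ ≤ ∫ lam in (-Real.pi)..Real.pi, M * (M * (GFun g B r lam).re) := by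
          refine intervalIntegral.integral_mono_on hpi hint1.norm
            ((continuous_const.mul (continuous_const.mul
              (Complex.continuous_re.comp (GFun_cont g B r)))).intervalIntegrable _ _)
            fun lam _ => ?_
          rw [norm_mul, Complex.norm_real, Real.norm_eq_abs]
          exact mul_le_mul (hfM lam) (Tf_bound f hfmeas M hfM g B r hφf lam)
            (norm_nonneg _) hM0
      _ = (M * M) * ∫ lam in (-Real.pi)..Real.pi, (GFun g B r lam).re := by
          rw [show (fun lam => M * (M * (GFun g B r lam).re))
              = fun lam => (M * M) * (GFun g B r lam).re from funext fun lam => by ring]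
          exact intervalIntegral.integral_const_mul _ _
      _ = (M * M) * ∑ k ∈ Icc B r, ∑ t ∈ Icc 1 k, g k ^ 2 * (2 * Real.pi) * (2 * Real.pi) := by
          rw [G_int g B r]
  -- Step 4 : arithmetic
  have hsummable : Summable fun j => g (B + j) ^ 2 :=
    hg.comp_injective (add_right_injective B)
  have hIccle : ∑ k ∈ Icc B r, g k ^ 2 ≤ ∑' k : ℕ, g (B + k) ^ 2 := by
    rw [← Finset.Ico_add_one_right_eq_Icc, Finset.sum_Ico_eq_sum_range]
    exact Summable.sum_le_tsum _ (fun _ _ => sq_nonneg _) hsummable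
  have hDle : ∑ k ∈ Icc B r, ∑ t ∈ Icc 1 k, g k ^ 2 * (2 * Real.pi) * (2 * Real.pi)
      ≤ ((2 * Real.pi) * (2 * Real.pi) * r) * ∑' k : ℕ, g (B + k) ^ 2 := by
    have step1 : ∀ k ∈ Icc B r, ∑ t ∈ Icc 1 k, g k ^ 2 * (2 * Real.pi) * (2 * Real.pi)
        ≤ (r : ℝ) * (g k ^ 2 * (2 * Real.pi) * (2 * Real.pi)) := by
      intro k hk
      rw [Finset.sum_const, Nat.card_Icc, Nat.add_sub_cancel, nsmul_eq_mul]
      refine mul_le_mul_of_nonneg_right ?_ (by positivity)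
      exact_mod_cast (Finset.mem_Icc.1 hk).2
    calc ∑ k ∈ Icc B r, ∑ t ∈ Icc 1 k, g k ^ 2 * (2 * Real.pi) * (2 * Real.pi)
        ≤ ∑ k ∈ Icc B r, (r : ℝ) * (g k ^ 2 * (2 * Real.pi) * (2 * Real.pi)) :=
          Finset.sum_le_sum step1
      _ = ((2 * Real.pi) * (2 * Real.pi) * r) * ∑ k ∈ Icc B r, g k ^ 2 := by
          rw [Finset.mul_sum]
          exact Finset.sum_congr rfl fun k _ => by ring
      _ ≤ ((2 * Real.pi) * (2 * Real.pi) * r) * ∑' k : ℕ, g (B + k) ^ 2 := by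
          refine mul_le_mul_of_nonneg_left hIccle (by positivity)
  have habs : |∑ k ∈ Finset.Icc B r, ∑ k' ∈ Finset.Icc B r,
      ∑ t ∈ Finset.Icc 1 k, ∑ t' ∈ Finset.Icc 1 k',
        g k * g k'
          * (∫ x in (-Real.pi)..Real.pi, Real.cos (((t : ℤ) - (t' : ℤ)) * x) * f x)
          * (∫ x in (-Real.pi)..Real.pi,
              Real.cos (((t' : ℤ) - (k' : ℤ) - (t : ℤ) + (k : ℤ)) * x) * f x)|
      = ‖∫ lam in (-Real.pi)..Real.pi, (f lam : ℂ) * TfFun f g B r lam‖ := by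
    rw [hA, Complex.norm_real, Real.norm_eq_abs]
  rw [habs]
  calc ‖∫ lam in (-Real.pi)..Real.pi, (f lam : ℂ) * TfFun f g B r lam‖
      ≤ (M * M) * ∑ k ∈ Icc B r, ∑ t ∈ Icc 1 k, g k ^ 2 * (2 * Real.pi) * (2 * Real.pi) :=
        hmain
    _ ≤ (M * M) * (((2 * Real.pi) * (2 * Real.pi) * r) * ∑' k : ℕ, g (B + k) ^ 2) :=
        mul_le_mul_of_nonneg_left hDle (by positivity)
    _ ≤ 16 * Real.pi ^ 2 * M ^ 2 * r * ∑' k : ℕ, g (B + k) ^ 2 := by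
        have hY : 0 ≤ M ^ 2 * (r : ℝ) * ∑' k : ℕ, g (B + k) ^ 2 :=
          mul_nonneg (mul_nonneg (sq_nonneg M) (Nat.cast_nonneg r)) hTs0
        nlinarith [mul_nonneg (sq_nonneg Real.pi) hY]
end

section
/- [Proposition 1, first conclusion] Under the stationary setup, assume $\sum_{k\in\mathbb{Z}}|\gamma(k)| < \infty$ and $\sum_{(a,b,c)\in\mathbb{Z}^3}|\mathrm{cum}_4(a,b,c)| < \infty$. Let $(g_k)_{k\ge 0}$ be real numbers with $\sum_{k=0}^{\infty} g_k^2 < \infty$, and let $(B_n)_{n\ge 1}$ be positive integers with $B_n \to \infty$, $B_n/n \to 0$, and $\sqrt{n}\sum_{k=B_n}^{\infty}|\gamma(k)| \to 0$ as $n \to \infty$. For $1 \le k < m$ define $\hat{\gamma}_m(k) = m^{-1}\sum_{t=1}^{m-k} X_t X_{t+k}$. Then for every $\varepsilon > 0$ there exists $N_0$ such that for all $n \ge N_0$ and all integers $m$ with $1 \le m \le n$, $m^2\, \mathbb{E}\Big[\Big(\sum_{k=B_n}^{m-1} g_k\, \hat{\gamma}_m(k)\Big)^2\Big] \le \varepsilon\,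 n$ (the sum being empty, hence zero, when $m \le B_n$). In other words, $m^2 \mathbb{E}|T_{B_n}(\rho_{B_n}^{m}) - \hat{\theta}_m|^2 = o(n)$ uniformly over $1 \le m \le n$. -/
open MeasureTheory Filter

section AuxiliaryLemmas

variable {Ω : Type*} [MeasurableSpace Ω] {μ : Measure Ω}
variable {T : ℤ → Ω → Ω} {X0 : Ω → ℝ} {X : ℤ → Ω → ℝ}

/-- the measurable equivalence induced by `T u`. -/
noncomputable def Teqv (hT0 : T 0 = id) (hTadd : ∀ a b : ℤ, T (a + b) = T a ∘ T b)
    (hTmp : ∀ a : ℤ, MeasurePreserving (T a) μ μ) (u : ℤ) : Ω ≃ᵐ Ω where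
  toFun := T u
  invFun := T (-u)
  left_inv := fun ω => by
    have h : T (-u) (T u ω) = T (-u + u) ω := (congrFun (hTadd (-u) u) ω).symm
    rw [h, show -u + u = 0 by ring, hT0, id_eq]
  right_inv := fun ω => by
    have h : T u (T (-u) ω) = T (u + -u) ω := (congrFun (hTadd u (-u)) ω).symm
    rw [h, show u + -u = 0 by ring, hT0, id_eq]
  measurable_toFun := (hTmp u).measurable
  measurable_invFun := (hTmp (-u)).measurable

lemma shift_integral (hT0 : T 0 = id) (hTadd : ∀ a b : ℤ, T (a + b) = T a ∘ T b)
    (hTmp : ∀ a : ℤ, MeasurePreserving (T a) μ μ)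
    (hX : ∀ t ω, X t ω = X0 (T t ω)) (u : ℤ) (f : (ℤ → ℝ) → ℝ) :
    ∫ ω, f (fun i => X (i + u) ω) ∂μ = ∫ ω, f (fun i => X i ω) ∂μ := by
  have key : MeasurePreserving (⇑(Teqv hT0 hTadd hTmp u (μ := μ))) μ μ := hTmp u
  have h := MeasurePreserving.integral_comp' key (fun ω => f (fun i => X i ω))
  rw [← h]
  refine integral_congr_ae (Filter.Eventually.of_forall fun ω => ?_)
  show f (fun i => X (i + u) ω) = f (fun i => X i ((Teqv hT0 hTadd hTmp u (μ := μ)) ω))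
  congr 1
  funext i
  rw [hX, hX]
  have : T (i + u) ω = T i (Teqv hT0 hTadd hTmp u (μ := μ) ω) := by
    have := congrFun (hTadd i u) ω
    exact this
  rw [this]

lemma integrable_pow4 {f : Ω → ℝ} (hf : MemLp f 4 μ) :
    Integrable (fun ω => f ω ^ 4) μ := by
  have h := hf.integrable_norm_rpow (by norm_num) (by norm_num)
  refine h.congr (Filter.Eventually.of_forall fun ω => ?_)
  have h2 : ENNReal.toReal 4 = ((4:ℕ) : ℝ) := by norm_num
  show ‖f ω‖ ^ ENNReal.toReal 4 = f ω ^ 4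
  rw [h2, Real.norm_eq_abs, Real.rpow_natCast, pow_abs,
    abs_of_nonneg (by positivity : (0:ℝ) ≤ f ω ^ 4)]

lemma integrable_mul4 {f₁ f₂ f₃ f₄ : Ω → ℝ} (h₁ : MemLp f₁ 4 μ) (h₂ : MemLp f₂ 4 μ)
    (h₃ : MemLp f₃ 4 μ) (h₄ : MemLp f₄ 4 μ) :
    Integrable (fun ω => f₁ ω * f₂ ω * f₃ ω * f₄ ω) μ := by
  have hmeas : AEStronglyMeasurable (fun ω => f₁ ω * f₂ ω * f₃ ω * f₄ ω) μ :=
    (((h₁.aestronglyMeasurable.mul h₂.aestronglyMeasurable).mul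
      h₃.aestronglyMeasurable).mul h₄.aestronglyMeasurable)
  have hdom : Integrable (fun ω => (f₁ ω ^ 4 + f₂ ω ^ 4 + f₃ ω ^ 4 + f₄ ω ^ 4) / 4) μ :=
    ((((integrable_pow4 h₁).add (integrable_pow4 h₂)).add (integrable_pow4 h₃)).add
      (integrable_pow4 h₄)).div_const 4
  refine hdom.mono' hmeas (Filter.Eventually.of_forall fun ω => ?_)
  rw [Real.norm_eq_abs]
  have h1 : |f₁ ω * f₂ ω| ≤ (f₁ ω ^ 2 + f₂ ω ^ 2)/2 := by
    rw [abs_mul]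
    nlinarith [sq_abs (f₁ ω), sq_abs (f₂ ω), sq_nonneg (|f₁ ω| - |f₂ ω|)]
  have h2 : |f₃ ω * f₄ ω| ≤ (f₃ ω ^ 2 + f₄ ω ^ 2)/2 := by
    rw [abs_mul]
    nlinarith [sq_abs (f₃ ω), sq_abs (f₄ ω), sq_nonneg (|f₃ ω| - |f₄ ω|)]
  have h3 : |f₁ ω * f₂ ω * f₃ ω * f₄ ω| = |f₁ ω * f₂ ω| * |f₃ ω * f₄ ω| := by
    rw [← abs_mul]; ring_nf
  rw [h3]
  have hmm := mul_le_mul h1 h2 (abs_nonneg _) (by positivity)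
  nlinarith [sq_nonneg (f₁ ω ^ 2 - f₂ ω ^ 2), sq_nonneg (f₃ ω ^ 2 - f₄ ω ^ 2),
    hmm, sq_nonneg (f₁ ω ^2 + f₂ ω ^2 - f₃ ω ^2 - f₄ ω^2)]

lemma sum_comp_le_tsum {ι β : Type*} (f : ι → ℝ) (hnn : ∀ i, 0 ≤ f i) (hf : Summable f)
    (s : Finset β) (e : β → ι) (he : Set.InjOn e s) : ∑ b ∈ s, f (e b) ≤ ∑' i, f i := by
  classical
  rw [← Finset.sum_image (fun x hx y hy h => he (by simpa using hx) (by simpa using hy) h)]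
  exact Summable.sum_le_tsum _ (fun i _ => hnn i) hf

lemma row_bound {ι : Type*} (f : ι → ℝ) (hnn : ∀ i, 0 ≤ f i) (hf : Summable f)
    (K U : Finset ℕ) (m : ℝ) (hU : (U.card : ℝ) ≤ m)
    (e : ℕ → ℕ → ℕ → ι)
    (he : ∀ t, Set.InjOn (fun p : ℕ × ℕ => e t p.1 p.2) ((K ×ˢ U : Finset (ℕ × ℕ)) : Set (ℕ × ℕ))) :
    ∑ x ∈ K, ∑ t ∈ U, ∑ s ∈ U, f (e t x s) ≤ m * ∑' i, f i := by
  rw [Finset.sum_comm]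
  have ht : ∀ t ∈ U, ∑ x ∈ K, ∑ s ∈ U, f (e t x s) ≤ ∑' i, f i := by
    intro t _
    rw [← Finset.sum_product']
    exact sum_comp_le_tsum f hnn hf (K ×ˢ U) (fun p => e t p.1 p.2) (he t)
  calc ∑ t ∈ U, ∑ x ∈ K, ∑ s ∈ U, f (e t x s) ≤ U.card • (∑' i, f i) :=
        Finset.sum_le_card_nsmul _ _ _ ht
    _ = (U.card : ℝ) * ∑' i, f i := nsmul_eq_mul _ _
    _ ≤ m * ∑' i, f i := mul_le_mul_of_nonneg_right hU (tsum_nonneg hnn)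

lemma quad_bound {K U : Finset ℕ} {a : ℕ → ℝ} {F : ℕ → ℕ → ℕ → ℕ → ℝ} {M τ : ℝ}
    (hF : ∀ k l t s, 0 ≤ F k l t s)
    (hrow : ∀ k ∈ K, ∑ l ∈ K, ∑ t ∈ U, ∑ s ∈ U, F k l t s ≤ M)
    (hcol : ∀ l ∈ K, ∑ k ∈ K, ∑ t ∈ U, ∑ s ∈ U, F k l t s ≤ M)
    (hsq : ∑ k ∈ K, a k ^ 2 ≤ τ) (hM : 0 ≤ M) :
    ∑ k ∈ K, ∑ l ∈ K, ∑ t ∈ U, ∑ s ∈ U, a k * a l * F k l t s ≤ τ * M := by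
  have hc : ∀ k l, 0 ≤ ∑ t ∈ U, ∑ s ∈ U, F k l t s :=
    fun k l => Finset.sum_nonneg fun t _ => Finset.sum_nonneg fun s _ => hF k l t s
  have step1 : ∀ k l : ℕ, ∑ t ∈ U, ∑ s ∈ U, a k * a l * F k l t s
      = (a k * a l) * ∑ t ∈ U, ∑ s ∈ U, F k l t s := by
    intro k l
    rw [Finset.mul_sum]
    exact Finset.sum_congr rfl fun t _ => by rw [Finset.mul_sum]
  have hA : ∑ k ∈ K, ∑ l ∈ K, a k ^ 2 * (∑ t ∈ U, ∑ s ∈ U, F k l t s) ≤ τ * M := by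
    calc ∑ k ∈ K, ∑ l ∈ K, a k ^ 2 * (∑ t ∈ U, ∑ s ∈ U, F k l t s)
        ≤ ∑ k ∈ K, a k ^ 2 * M := by
          refine Finset.sum_le_sum fun k hk => ?_
          calc ∑ l ∈ K, a k ^ 2 * (∑ t ∈ U, ∑ s ∈ U, F k l t s)
              = a k ^ 2 * ∑ l ∈ K, ∑ t ∈ U, ∑ s ∈ U, F k l t s := (Finset.mul_sum _ _ _).symm
            _ ≤ a k ^ 2 * M := mul_le_mul_of_nonneg_left (hrow k hk) (sq_nonneg _)
      _ = (∑ k ∈ K, a k ^ 2) * M := (Finset.sum_mul _ _ _).symm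
      _ ≤ τ * M := mul_le_mul_of_nonneg_right hsq hM
  have hB : ∑ k ∈ K, ∑ l ∈ K, a l ^ 2 * (∑ t ∈ U, ∑ s ∈ U, F k l t s) ≤ τ * M := by
    rw [Finset.sum_comm]
    calc ∑ l ∈ K, ∑ k ∈ K, a l ^ 2 * (∑ t ∈ U, ∑ s ∈ U, F k l t s)
        ≤ ∑ l ∈ K, a l ^ 2 * M := by
          refine Finset.sum_le_sum fun l hl => ?_
          calc ∑ k ∈ K, a l ^ 2 * (∑ t ∈ U, ∑ s ∈ U, F k l t s)
              = a l ^ 2 * ∑ k ∈ K, ∑ t ∈ U, ∑ s ∈ U, F k l t s := (Finset.mul_sum _ _ _).symm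
            _ ≤ a l ^ 2 * M := mul_le_mul_of_nonneg_left (hcol l hl) (sq_nonneg _)
      _ = (∑ l ∈ K, a l ^ 2) * M := (Finset.sum_mul _ _ _).symm
      _ ≤ τ * M := mul_le_mul_of_nonneg_right hsq hM
  calc ∑ k ∈ K, ∑ l ∈ K, ∑ t ∈ U, ∑ s ∈ U, a k * a l * F k l t s
      = ∑ k ∈ K, ∑ l ∈ K, (a k * a l) * ∑ t ∈ U, ∑ s ∈ U, F k l t s :=
        Finset.sum_congr rfl fun k _ => Finset.sum_congr rfl fun l _ => step1 k l
    _ ≤ ∑ k ∈ K, ∑ l ∈ K, (a k ^ 2 * (∑ t ∈ U, ∑ s ∈ U, F k l t s) / 2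
          + a l ^ 2 * (∑ t ∈ U, ∑ s ∈ U, F k l t s) / 2) := by
        refine Finset.sum_le_sum fun k _ => Finset.sum_le_sum fun l _ => ?_
        have hamgm : a k * a l ≤ (a k ^ 2 + a l ^ 2) / 2 := by nlinarith [sq_nonneg (a k - a l)]
        have := mul_le_mul_of_nonneg_right hamgm (hc k l)
        nlinarith [this]
    _ = (∑ k ∈ K, ∑ l ∈ K, a k ^ 2 * (∑ t ∈ U, ∑ s ∈ U, F k l t s)) / 2
          + (∑ k ∈ K, ∑ l ∈ K, a l ^ 2 * (∑ t ∈ U, ∑ s ∈ U, F k l t s)) / 2 := by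
        simp only [Finset.sum_add_distrib, ← Finset.sum_div]
    _ ≤ τ * M / 2 + τ * M / 2 := by
        have := hA; have := hB; linarith
    _ = τ * M := by ring

lemma enlarge_sum {K U : Finset ℕ} (V : ℕ → Finset ℕ) (hV : ∀ j, V j ⊆ U)
    (G : ℕ → ℕ → ℕ → ℕ → ℝ) (hG : ∀ k l t s, 0 ≤ G k l t s) :
    ∑ k ∈ K, ∑ l ∈ K, ∑ t ∈ V k, ∑ s ∈ V l, G k l t s
      ≤ ∑ k ∈ K, ∑ l ∈ K, ∑ t ∈ U, ∑ s ∈ U, G k l t s := by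
  refine Finset.sum_le_sum fun k _ => Finset.sum_le_sum fun l _ => ?_
  calc ∑ t ∈ V k, ∑ s ∈ V l, G k l t s
      ≤ ∑ t ∈ V k, ∑ s ∈ U, G k l t s := Finset.sum_le_sum fun t _ =>
        Finset.sum_le_sum_of_subset_of_nonneg (hV l) (fun s _ _ => hG k l t s)
    _ ≤ ∑ t ∈ U, ∑ s ∈ U, G k l t s := Finset.sum_le_sum_of_subset_of_nonneg (hV k)
        (fun t _ _ => Finset.sum_nonneg fun s _ => hG k l t s)

end AuxiliaryLemmas

set_option maxHeartbeats 1000000 in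
/-- Proposition 1, first conclusion: for a strictly stationary mean-zero
sequence `X t = X0 ∘ T t` (with `T` a measure-preserving `ℤ`-action) with summable
autocovariances and absolutely summable fourth cumulants, square-summable weights
`(g_k)`, and `Bₙ → ∞`, `Bₙ/n → 0`, `√n ∑_{k ≥ Bₙ} |γ(k)| → 0`, one has
`m² E[(∑_{k=Bₙ}^{m-1} g_k γ̂ₘ(k))²] = o(n)` uniformly over `1 ≤ m ≤ n`, where
`γ̂ₘ(k) = m⁻¹ ∑_{t=1}^{m-k} Xₜ X_{t+k}`. -/
theorem truncated_spectral_mean_tail_uniform_small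
    {Ω : Type*} [MeasurableSpace Ω] (μ : Measure Ω) [IsProbabilityMeasure μ]
    (T : ℤ → Ω → Ω)
    (hT0 : T 0 = id)
    (hTadd : ∀ a b : ℤ, T (a + b) = T a ∘ T b)
    (hTmp : ∀ a : ℤ, MeasurePreserving (T a) μ μ)
    (X0 : Ω → ℝ) (hX0 : Measurable X0)
    (hmean : ∫ ω, X0 ω ∂μ = 0)
    (hmom4 : MemLp X0 4 μ)
    (X : ℤ → Ω → ℝ) (hX : ∀ t ω, X t ω = X0 (T t ω))
    (γ : ℤ → ℝ) (hγ : ∀ k, γ k = ∫ ω, X 0 ω * X k ω ∂μ)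
    (cum4 : ℤ → ℤ → ℤ → ℝ)
    (hcum4 : ∀ a b c, cum4 a b c =
      (∫ ω, X 0 ω * X a ω * X b ω * X c ω ∂μ)
        - γ a * γ (b - c) - γ b * γ (a - c) - γ c * γ (a - b))
    (hγsum : Summable fun k : ℤ => |γ k|)
    (hcumsum : Summable fun p : ℤ × ℤ × ℤ => |cum4 p.1 p.2.1 p.2.2|)
    (g : ℕ → ℝ) (hg : Summable fun k => g k ^ 2)
    (B : ℕ → ℕ) (hBpos : ∀ n, 1 ≤ B n)
    (hBtop : Tendsto B atTop atTop)
    (hBsmall : Tendsto (fun n => (B n : ℝ) / n) atTop (nhds 0))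
    (hγtail : Tendsto (fun n : ℕ => Real.sqrt (n : ℝ) * ∑' k : ℕ, |γ ((B n : ℤ) + (k : ℤ))|)
      atTop (nhds 0)) :
    ∀ ε > (0 : ℝ), ∃ N₀ : ℕ, ∀ n ≥ N₀, ∀ m : ℕ, 1 ≤ m → m ≤ n →
      (m : ℝ) ^ 2 * ∫ ω, (∑ k ∈ Finset.Icc (B n) (m - 1),
          g k * ((m : ℝ)⁻¹ * ∑ t ∈ Finset.Icc 1 (m - k),
            X (t : ℤ) ω * X ((t : ℤ) + (k : ℤ)) ω)) ^ 2 ∂μ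
        ≤ ε * n := by
  classical
  intro ε hε
  -- basic facts about X
  have hXfun : ∀ t : ℤ, X t = X0 ∘ T t := fun t => funext (hX t)
  have hXmem : ∀ t : ℤ, MemLp (X t) 4 μ := fun t => by
    rw [hXfun t]; exact hmom4.comp_measurePreserving (hTmp t)
  have int4 : ∀ a b c d : ℤ, Integrable (fun ω => X a ω * X b ω * X c ω * X d ω) μ :=
    fun a b c d => integrable_mul4 (hXmem a) (hXmem b) (hXmem c) (hXmem d)
  have shift4 : ∀ u a b c d : ℤ,
      ∫ ω, X (a+u) ω * X (b+u) ω * X (c+u) ω * X (d+u) ω ∂μ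
        = ∫ ω, X a ω * X b ω * X c ω * X d ω ∂μ := fun u a b c d => by
    simpa using shift_integral hT0 hTadd hTmp hX u (fun Y => Y a * Y b * Y c * Y d)
  have shift2 : ∀ u a b : ℤ, ∫ ω, X (a+u) ω * X (b+u) ω ∂μ = ∫ ω, X a ω * X b ω ∂μ :=
    fun u a b => by simpa using shift_integral hT0 hTadd hTmp hX u (fun Y => Y a * Y b)
  have γsymm : ∀ k : ℤ, γ (-k) = γ k := by
    intro k
    have h := shift2 k (-k) 0
    rw [show -k + k = 0 by ring, show (0:ℤ) + k = k by ring] at h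
    have hcomm : ∫ ω, X 0 ω * X (-k) ω ∂μ = ∫ ω, X (-k) ω * X 0 ω ∂μ :=
      integral_congr_ae (Filter.Eventually.of_forall fun ω => mul_comm _ _)
    rw [hγ, hγ, hcomm, ← h]
  have E4dec : ∀ k l t s : ℤ,
      ∫ ω, X t ω * X (t + k) ω * X s ω * X (s + l) ω ∂μ
        = cum4 k (s - t) (s - t + l) + γ k * γ l + γ (s - t) * γ (s - t + l - k)
          + γ (s - t + l) * γ (s - t - k) := by
    intro k l t s
    have h1 := shift4 t 0 k (s - t) (s - t + l)
    rw [show (0:ℤ) + t = t by ring, show k + t = t + k by ring, show s - t + t = s by ring,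
      show s - t + l + t = s + l by ring] at h1
    have h2 := hcum4 k (s - t) (s - t + l)
    rw [show s - t - (s - t + l) = -l by ring, γsymm l,
      show k - (s - t + l) = -(s - t + l - k) by ring, γsymm (s - t + l - k),
      show k - (s - t) = -(s - t - k) by ring, γsymm (s - t - k)] at h2
    rw [h1]
    linarith [h2]
  have E4bound : ∀ k l t s : ℤ,
      |∫ ω, X t ω * X (t + k) ω * X s ω * X (s + l) ω ∂μ|
        ≤ |cum4 k (s - t) (s - t + l)| + |γ k| * |γ l| + |γ (s - t)| * |γ (s - t + l - k)|
          + |γ (s - t + l)| * |γ (s - t - k)| := by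
    intro k l t s
    rw [E4dec k l t s]
    have h4 : ∀ a b c d : ℝ, |a + b + c + d| ≤ |a| + |b| + |c| + |d| := fun a b c d =>
      (abs_add_le _ _).trans (add_le_add ((abs_add_le _ _).trans
        (add_le_add (abs_add_le a b) le_rfl)) le_rfl)
    calc |cum4 k (s - t) (s - t + l) + γ k * γ l + γ (s - t) * γ (s - t + l - k)
          + γ (s - t + l) * γ (s - t - k)|
        ≤ |cum4 k (s - t) (s - t + l)| + |γ k * γ l| + |γ (s - t) * γ (s - t + l - k)|
          + |γ (s - t + l) * γ (s - t - k)| := h4 _ _ _ _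
      _ = |cum4 k (s - t) (s - t + l)| + |γ k| * |γ l| + |γ (s - t)| * |γ (s - t + l - k)|
          + |γ (s - t + l)| * |γ (s - t - k)| := by rw [abs_mul, abs_mul, abs_mul]
  -- constants
  have hΓdef : True := trivial
  have hΓ0 : 0 ≤ (∑' k : ℤ, |γ k|) := tsum_nonneg fun _ => abs_nonneg _
  have hCg20 : 0 ≤ (∑' k : ℕ, g k ^ 2) := tsum_nonneg fun _ => sq_nonneg _
  have hCc0 : 0 ≤ (∑' p : ℤ × ℤ × ℤ, |cum4 p.1 p.2.1 p.2.2|) := tsum_nonneg fun _ => abs_nonneg _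
  have hf2sum : Summable (fun p : ℤ × ℤ => |γ p.1| * |γ p.2|) :=
    hγsum.mul_of_nonneg hγsum (fun k => abs_nonneg _) (fun k => abs_nonneg _)
  have hf2nn : ∀ p : ℤ × ℤ, 0 ≤ |γ p.1| * |γ p.2| :=
    fun p => mul_nonneg (abs_nonneg _) (abs_nonneg _)
  have hf2tsum : ∑' p : ℤ × ℤ, |γ p.1| * |γ p.2| = (∑' k : ℤ, |γ k|) * (∑' k : ℤ, |γ k|) :=
    (hγsum.hasSum.mul_eq hγsum.hasSum hf2sum.hasSum).symm
  have hf3nn : ∀ p : ℤ × ℤ × ℤ, 0 ≤ |cum4 p.1 p.2.1 p.2.2| := fun p => abs_nonneg _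
  -- tails
  have htga0 : ∀ n : ℕ, 0 ≤ ∑' j : ℕ, |γ ((B n : ℤ) + (j : ℤ))| :=
    fun n => tsum_nonneg fun _ => abs_nonneg _
  have htau0 : ∀ n : ℕ, 0 ≤ ∑' j : ℕ, g (B n + j) ^ 2 :=
    fun n => tsum_nonneg fun _ => sq_nonneg _
  have hγtailsum : ∀ n : ℕ, Summable (fun j : ℕ => |γ ((B n : ℤ) + (j : ℤ))|) := by
    intro n
    have hinj : Function.Injective (fun j : ℕ => (B n : ℤ) + (j : ℤ)) := by
      intro a b hab
      simpa using hab
    have := hγsum.comp_injective hinj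
    exact this
  have hgtail : ∀ M : ℕ, Summable (fun j : ℕ => g (M + j) ^ 2) := by
    intro M
    have hinj : Function.Injective (fun j : ℕ => M + j) := by
      intro a b hab
      simpa using hab
    have := hg.comp_injective hinj
    exact this
  have hg_le : ∀ k : ℕ, g k ^ 2 ≤ (∑' k : ℕ, g k ^ 2) := fun k => Summable.le_tsum hg k (fun j _ => sq_nonneg _)
  have hgCg : ∀ k l : ℕ, |g k| * |g l| ≤ (∑' k : ℕ, g k ^ 2) := by
    intro k l
    nlinarith [hg_le k, hg_le l, sq_abs (g k), sq_abs (g l), sq_nonneg (|g k| - |g l|)]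
  -- tendsto facts
  have htautend : Tendsto (fun n : ℕ => ∑' j : ℕ, g (B n + j) ^ 2) atTop (nhds 0) := by
    have h1 : Tendsto (fun M : ℕ => ∑' j : ℕ, g (j + M) ^ 2) atTop (nhds 0) :=
      tendsto_sum_nat_add (fun k => g k ^ 2)
    have h2 : Tendsto (fun n : ℕ => ∑' j : ℕ, g (j + B n) ^ 2) atTop (nhds 0) := h1.comp hBtop
    refine h2.congr fun n => ?_
    exact tsum_congr fun j => by rw [Nat.add_comm]
  have hbr : Tendsto (fun n : ℕ => (∑' k : ℕ, g k ^ 2) * (Real.sqrt n * (∑' j : ℕ, |γ ((B n : ℤ) + (j : ℤ))|)) ^ 2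
      + (∑' j : ℕ, g (B n + j) ^ 2) * (2 * ((∑' k : ℤ, |γ k|) * (∑' k : ℤ, |γ k|)) + (∑' p : ℤ × ℤ × ℤ, |cum4 p.1 p.2.1 p.2.2|))) atTop (nhds 0) := by
    have h1 : Tendsto (fun n : ℕ =>
        (Real.sqrt n * (∑' j : ℕ, |γ ((B n : ℤ) + (j : ℤ))|)) ^ 2) atTop (nhds 0) := by
      have := hγtail.mul hγtail
      simp only [mul_zero] at this
      refine this.congr fun n => ?_
      rw [pow_two]
    have h2 := (h1.const_mul (∑' k : ℕ, g k ^ 2)).add (htautend.mul_const (2 * ((∑' k : ℤ, |γ k|) * (∑' k : ℤ, |γ k|)) + (∑' p : ℤ × ℤ × ℤ, |cum4 p.1 p.2.1 p.2.2|)))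
    simpa using h2
  have hev : ∀ᶠ n : ℕ in atTop,
      (∑' k : ℕ, g k ^ 2) * (Real.sqrt n * (∑' j : ℕ, |γ ((B n : ℤ) + (j : ℤ))|)) ^ 2 + (∑' j : ℕ, g (B n + j) ^ 2) * (2 * ((∑' k : ℤ, |γ k|) * (∑' k : ℤ, |γ k|)) + (∑' p : ℤ × ℤ × ℤ, |cum4 p.1 p.2.1 p.2.2|)) < ε :=
    hbr.eventually_lt_const hε
  obtain ⟨N₀, hN₀⟩ := Filter.eventually_atTop.mp hev
  refine ⟨N₀, fun n hn m hm1 hmn => ?_⟩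
  -- now fix n and m
  have hm0 : (m : ℝ) ≠ 0 := Nat.cast_ne_zero.2 (by omega)
  have hmn' : (m : ℝ) ≤ (n : ℝ) := Nat.cast_le.2 hmn
  have hm0' : (0 : ℝ) ≤ (m : ℝ) := Nat.cast_nonneg m
  have expand : ∀ ω : Ω,
      (∑ k ∈ Finset.Icc (B n) (m - 1), g k * ((m : ℝ)⁻¹ * ∑ t ∈ Finset.Icc 1 (m - k),
          X (t : ℤ) ω * X ((t : ℤ) + (k : ℤ)) ω)) ^ 2
      = ∑ k ∈ Finset.Icc (B n) (m - 1), ∑ l ∈ Finset.Icc (B n) (m - 1), ∑ t ∈ Finset.Icc 1 (m - k), ∑ s ∈ Finset.Icc 1 (m - l), (m : ℝ)⁻¹ * (m : ℝ)⁻¹ * (g k * g l) * (X (t : ℤ) ω * X ((t : ℤ) + (k : ℤ)) ω * X (s : ℤ) ω * X ((s : ℤ) + (l : ℤ)) ω) := by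
    intro ω
    rw [pow_two, Finset.sum_mul_sum]
    refine Finset.sum_congr rfl fun k _ => Finset.sum_congr rfl fun l _ => ?_
    rw [show (g k * ((m : ℝ)⁻¹ * ∑ t ∈ Finset.Icc 1 (m - k),
            X (t : ℤ) ω * X ((t : ℤ) + (k : ℤ)) ω)) *
        (g l * ((m : ℝ)⁻¹ * ∑ t ∈ Finset.Icc 1 (m - l),
            X (t : ℤ) ω * X ((t : ℤ) + (l : ℤ)) ω))
      = ((m : ℝ)⁻¹ * (m : ℝ)⁻¹ * (g k * g l)) *
        ((∑ t ∈ Finset.Icc 1 (m - k), X (t : ℤ) ω * X ((t : ℤ) + (k : ℤ)) ω) *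
         (∑ t ∈ Finset.Icc 1 (m - l), X (t : ℤ) ω * X ((t : ℤ) + (l : ℤ)) ω)) from by ring,
      Finset.sum_mul_sum, Finset.mul_sum]
    refine Finset.sum_congr rfl fun t _ => ?_
    rw [Finset.mul_sum]
    refine Finset.sum_congr rfl fun s _ => ?_
    ring
  have cancel : ∀ x y : ℝ, (m : ℝ) ^ 2 * ((m : ℝ)⁻¹ * (m : ℝ)⁻¹ * x * y) = x * y := by
    intro x y
    calc (m : ℝ) ^ 2 * ((m : ℝ)⁻¹ * (m : ℝ)⁻¹ * x * y)
        = ((m : ℝ) * (m : ℝ)⁻¹) * (((m : ℝ) * (m : ℝ)⁻¹) * (x * y)) := by ring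
      _ = x * y := by rw [mul_inv_cancel₀ hm0]; ring
  have core : (m : ℝ) ^ 2 * ∫ ω, (∑ k ∈ Finset.Icc (B n) (m - 1),
        g k * ((m : ℝ)⁻¹ * ∑ t ∈ Finset.Icc 1 (m - k),
          X (t : ℤ) ω * X ((t : ℤ) + (k : ℤ)) ω)) ^ 2 ∂μ
      = ∑ k ∈ Finset.Icc (B n) (m - 1), ∑ l ∈ Finset.Icc (B n) (m - 1), ∑ t ∈ Finset.Icc 1 (m - k), ∑ s ∈ Finset.Icc 1 (m - l), g k * g l * ∫ ω, X (t : ℤ) ω * X ((t : ℤ) + (k : ℤ)) ω * X (s : ℤ) ω * X ((s : ℤ) + (l : ℤ)) ω ∂μ := by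
    simp only [expand]
    rw [integral_finset_sum _ (fun k _ => integrable_finset_sum _ (fun l _ =>
      integrable_finset_sum _ (fun t _ => integrable_finset_sum _ (fun s _ =>
        (int4 _ _ _ _).const_mul _)))), Finset.mul_sum]
    refine Finset.sum_congr rfl fun k _ => ?_
    rw [integral_finset_sum _ (fun l _ => integrable_finset_sum _ (fun t _ =>
      integrable_finset_sum _ (fun s _ => (int4 _ _ _ _).const_mul _))), Finset.mul_sum]
    refine Finset.sum_congr rfl fun l _ => ?_
    rw [integral_finset_sum _ (fun t _ => integrable_finset_sum _ (fun s _ =>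
      (int4 _ _ _ _).const_mul _)), Finset.mul_sum]
    refine Finset.sum_congr rfl fun t _ => ?_
    rw [integral_finset_sum _ (fun s _ => (int4 _ _ _ _).const_mul _), Finset.mul_sum]
    refine Finset.sum_congr rfl fun s _ => ?_
    rw [integral_const_mul]
    exact cancel (g k * g l) _
  -- membership facts
  have hKmem : ∀ k ∈ Finset.Icc (B n) (m - 1), B n ≤ k := fun k hk => (Finset.mem_Icc.1 hk).1
  have hUcard : ((Finset.Icc 1 m).card : ℝ) = (m : ℝ) := by
    rw [Nat.card_Icc]; simp
  have hTsub : ∀ j : ℕ, Finset.Icc 1 (m - j) ⊆ Finset.Icc 1 m :=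
    fun j => Finset.Icc_subset_Icc_right (Nat.sub_le m j)
  have hKγ : ∑ k ∈ Finset.Icc (B n) (m - 1), |γ (k : ℤ)| ≤ ∑' j : ℕ, |γ ((B n : ℤ) + (j : ℤ))| := by
    have hcongr : ∀ k ∈ Finset.Icc (B n) (m - 1),
        |γ (k : ℤ)| = (fun j : ℕ => |γ ((B n : ℤ) + (j : ℤ))|) (k - B n) := by
      intro k hk
      have hBk := hKmem k hk
      show |γ (k : ℤ)| = |γ ((B n : ℤ) + ((k - B n : ℕ) : ℤ))|
      have h2 : (k : ℤ) = (B n : ℤ) + ((k - B n : ℕ) : ℤ) := by omega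
      rw [← h2]
    rw [Finset.sum_congr rfl hcongr]
    refine sum_comp_le_tsum _ (fun j => abs_nonneg _) (hγtailsum n) _ (fun k => k - B n) ?_
    intro x hx y hy hxy
    have hx' := hKmem x (by simpa using hx)
    have hy' := hKmem y (by simpa using hy)
    have hxy' : x - B n = y - B n := hxy
    omega
  have hτmem : ∀ k ∈ Finset.Icc (B n) (m - 1), g k ^ 2 ≤ ∑' j : ℕ, g (B n + j) ^ 2 := by
    intro k hk
    have hBk := hKmem k hk
    have h2 : g k ^ 2 = (fun j : ℕ => g (B n + j) ^ 2) (k - B n) := by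
      show g k ^ 2 = g (B n + (k - B n)) ^ 2
      have h3 : B n + (k - B n) = k := by omega
      rw [h3]
    rw [h2]
    exact Summable.le_tsum (hgtail (B n)) _ (fun j _ => sq_nonneg _)
  have hKg2 : ∑ k ∈ Finset.Icc (B n) (m - 1), |g k| ^ 2 ≤ ∑' j : ℕ, g (B n + j) ^ 2 := by
    have hcongr : ∀ k ∈ Finset.Icc (B n) (m - 1),
        |g k| ^ 2 = (fun j : ℕ => g (B n + j) ^ 2) (k - B n) := by
      intro k hk
      have hBk := hKmem k hk
      show |g k| ^ 2 = g (B n + (k - B n)) ^ 2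
      have h3 : B n + (k - B n) = k := by omega
      rw [h3, sq_abs]
    rw [Finset.sum_congr rfl hcongr]
    refine sum_comp_le_tsum _ (fun j => sq_nonneg _) (hgtail (B n)) _ (fun k => k - B n) ?_
    intro x hx y hy hxy
    have hx' := hKmem x (by simpa using hx)
    have hy' := hKmem y (by simpa using hy)
    have hxy' : x - B n = y - B n := hxy
    omega
  -- the four row/column bounds
  have hrow2 : ∀ k ∈ Finset.Icc (B n) (m - 1), ∑ l ∈ Finset.Icc (B n) (m - 1), ∑ t ∈ Finset.Icc 1 m, ∑ s ∈ Finset.Icc 1 m,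
      |γ ((s : ℤ) - (t : ℤ))| * |γ ((s : ℤ) - (t : ℤ) + (l : ℤ) - (k : ℤ))| ≤ (m : ℝ) * ((∑' k : ℤ, |γ k|) * (∑' k : ℤ, |γ k|)) := by
    intro k _
    have h := row_bound (fun p : ℤ × ℤ => |γ p.1| * |γ p.2|) hf2nn hf2sum
      (Finset.Icc (B n) (m - 1)) (Finset.Icc 1 m) (m : ℝ) (le_of_eq hUcard)
      (fun t l s => (((s : ℤ) - (t : ℤ)), ((s : ℤ) - (t : ℤ) + (l : ℤ) - (k : ℤ)))) ?_
    · rw [hf2tsum] at h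
      exact h
    · intro t p hp q hq hpq
      obtain ⟨p1, p2⟩ := p
      obtain ⟨q1, q2⟩ := q
      simp only [Prod.mk.injEq] at hpq ⊢
      omega
  have hcol2 : ∀ l ∈ Finset.Icc (B n) (m - 1), ∑ k ∈ Finset.Icc (B n) (m - 1), ∑ t ∈ Finset.Icc 1 m, ∑ s ∈ Finset.Icc 1 m,
      |γ ((s : ℤ) - (t : ℤ))| * |γ ((s : ℤ) - (t : ℤ) + (l : ℤ) - (k : ℤ))| ≤ (m : ℝ) * ((∑' k : ℤ, |γ k|) * (∑' k : ℤ, |γ k|)) := by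
    intro l _
    have h := row_bound (fun p : ℤ × ℤ => |γ p.1| * |γ p.2|) hf2nn hf2sum
      (Finset.Icc (B n) (m - 1)) (Finset.Icc 1 m) (m : ℝ) (le_of_eq hUcard)
      (fun t k s => (((s : ℤ) - (t : ℤ)), ((s : ℤ) - (t : ℤ) + (l : ℤ) - (k : ℤ)))) ?_
    · rw [hf2tsum] at h
      exact h
    · intro t p hp q hq hpq
      obtain ⟨p1, p2⟩ := p
      obtain ⟨q1, q2⟩ := q
      simp only [Prod.mk.injEq] at hpq ⊢
      omega
  have hrow3 : ∀ k ∈ Finset.Icc (B n) (m - 1), ∑ l ∈ Finset.Icc (B n) (m - 1), ∑ t ∈ Finset.Icc 1 m, ∑ s ∈ Finset.Icc 1 m,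
      |γ ((s : ℤ) - (t : ℤ) + (l : ℤ))| * |γ ((s : ℤ) - (t : ℤ) - (k : ℤ))| ≤ (m : ℝ) * ((∑' k : ℤ, |γ k|) * (∑' k : ℤ, |γ k|)) := by
    intro k _
    have h := row_bound (fun p : ℤ × ℤ => |γ p.1| * |γ p.2|) hf2nn hf2sum
      (Finset.Icc (B n) (m - 1)) (Finset.Icc 1 m) (m : ℝ) (le_of_eq hUcard)
      (fun t l s => (((s : ℤ) - (t : ℤ) + (l : ℤ)), ((s : ℤ) - (t : ℤ) - (k : ℤ)))) ?_
    · rw [hf2tsum] at h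
      exact h
    · intro t p hp q hq hpq
      obtain ⟨p1, p2⟩ := p
      obtain ⟨q1, q2⟩ := q
      simp only [Prod.mk.injEq] at hpq ⊢
      omega
  have hcol3 : ∀ l ∈ Finset.Icc (B n) (m - 1), ∑ k ∈ Finset.Icc (B n) (m - 1), ∑ t ∈ Finset.Icc 1 m, ∑ s ∈ Finset.Icc 1 m,
      |γ ((s : ℤ) - (t : ℤ) + (l : ℤ))| * |γ ((s : ℤ) - (t : ℤ) - (k : ℤ))| ≤ (m : ℝ) * ((∑' k : ℤ, |γ k|) * (∑' k : ℤ, |γ k|)) := by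
    intro l _
    have h := row_bound (fun p : ℤ × ℤ => |γ p.1| * |γ p.2|) hf2nn hf2sum
      (Finset.Icc (B n) (m - 1)) (Finset.Icc 1 m) (m : ℝ) (le_of_eq hUcard)
      (fun t k s => (((s : ℤ) - (t : ℤ) + (l : ℤ)), ((s : ℤ) - (t : ℤ) - (k : ℤ)))) ?_
    · rw [hf2tsum] at h
      exact h
    · intro t p hp q hq hpq
      obtain ⟨p1, p2⟩ := p
      obtain ⟨q1, q2⟩ := q
      simp only [Prod.mk.injEq] at hpq ⊢
      omega
  have hrowc : ∀ k ∈ Finset.Icc (B n) (m - 1), ∑ l ∈ Finset.Icc (B n) (m - 1), ∑ t ∈ Finset.Icc 1 m, ∑ s ∈ Finset.Icc 1 m,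
      |cum4 (k : ℤ) ((s : ℤ) - (t : ℤ)) ((s : ℤ) - (t : ℤ) + (l : ℤ))| ≤ (m : ℝ) * (∑' p : ℤ × ℤ × ℤ, |cum4 p.1 p.2.1 p.2.2|) := by
    intro k _
    exact row_bound (fun p : ℤ × ℤ × ℤ => |cum4 p.1 p.2.1 p.2.2|) hf3nn hcumsum
      (Finset.Icc (B n) (m - 1)) (Finset.Icc 1 m) (m : ℝ) (le_of_eq hUcard)
      (fun t l s => ((k : ℤ), ((s : ℤ) - (t : ℤ)), ((s : ℤ) - (t : ℤ) + (l : ℤ)))) (by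
        intro t p hp q hq hpq
        obtain ⟨p1, p2⟩ := p
        obtain ⟨q1, q2⟩ := q
        simp only [Prod.mk.injEq] at hpq ⊢
        omega)
  have hcolc : ∀ l ∈ Finset.Icc (B n) (m - 1), ∑ k ∈ Finset.Icc (B n) (m - 1), ∑ t ∈ Finset.Icc 1 m, ∑ s ∈ Finset.Icc 1 m,
      |cum4 (k : ℤ) ((s : ℤ) - (t : ℤ)) ((s : ℤ) - (t : ℤ) + (l : ℤ))| ≤ (m : ℝ) * (∑' p : ℤ × ℤ × ℤ, |cum4 p.1 p.2.1 p.2.2|) := by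
    intro l _
    exact row_bound (fun p : ℤ × ℤ × ℤ => |cum4 p.1 p.2.1 p.2.2|) hf3nn hcumsum
      (Finset.Icc (B n) (m - 1)) (Finset.Icc 1 m) (m : ℝ) (le_of_eq hUcard)
      (fun t k s => ((k : ℤ), ((s : ℤ) - (t : ℤ)), ((s : ℤ) - (t : ℤ) + (l : ℤ)))) (by
        intro t p hp q hq hpq
        obtain ⟨p1, p2⟩ := p
        obtain ⟨q1, q2⟩ := q
        simp only [Prod.mk.injEq] at hpq ⊢
        omega)
  -- bounds for the four split sums
  have hMΓ : (0 : ℝ) ≤ (m : ℝ) * ((∑' k : ℤ, |γ k|) * (∑' k : ℤ, |γ k|)) := mul_nonneg hm0' (mul_nonneg hΓ0 hΓ0)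
  have hMc : (0 : ℝ) ≤ (m : ℝ) * (∑' p : ℤ × ℤ × ℤ, |cum4 p.1 p.2.1 p.2.2|) := mul_nonneg hm0' hCc0
  have hS2 : ∑ k ∈ Finset.Icc (B n) (m - 1), ∑ l ∈ Finset.Icc (B n) (m - 1), ∑ t ∈ Finset.Icc 1 m, ∑ s ∈ Finset.Icc 1 m, |g k| * |g l| * (|γ ((s : ℤ) - (t : ℤ))| * |γ ((s : ℤ) - (t : ℤ) + (l : ℤ) - (k : ℤ))|) ≤ (∑' j : ℕ, g (B n + j) ^ 2) * ((m : ℝ) * ((∑' k : ℤ, |γ k|) * (∑' k : ℤ, |γ k|))) :=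
    quad_bound (fun k l t s => mul_nonneg (abs_nonneg _) (abs_nonneg _)) hrow2 hcol2 hKg2 hMΓ
  have hS3 : ∑ k ∈ Finset.Icc (B n) (m - 1), ∑ l ∈ Finset.Icc (B n) (m - 1), ∑ t ∈ Finset.Icc 1 m, ∑ s ∈ Finset.Icc 1 m, |g k| * |g l| * (|γ ((s : ℤ) - (t : ℤ) + (l : ℤ))| * |γ ((s : ℤ) - (t : ℤ) - (k : ℤ))|) ≤ (∑' j : ℕ, g (B n + j) ^ 2) * ((m : ℝ) * ((∑' k : ℤ, |γ k|) * (∑' k : ℤ, |γ k|))) :=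
    quad_bound (fun k l t s => mul_nonneg (abs_nonneg _) (abs_nonneg _)) hrow3 hcol3 hKg2 hMΓ
  have hSc : ∑ k ∈ Finset.Icc (B n) (m - 1), ∑ l ∈ Finset.Icc (B n) (m - 1), ∑ t ∈ Finset.Icc 1 m, ∑ s ∈ Finset.Icc 1 m, |g k| * |g l| * |cum4 (k : ℤ) ((s : ℤ) - (t : ℤ)) ((s : ℤ) - (t : ℤ) + (l : ℤ))| ≤ (∑' j : ℕ, g (B n + j) ^ 2) * ((m : ℝ) * (∑' p : ℤ × ℤ × ℤ, |cum4 p.1 p.2.1 p.2.2|)) :=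
    quad_bound (fun k l t s => abs_nonneg _) hrowc hcolc hKg2 hMc
  have hS1 : ∑ k ∈ Finset.Icc (B n) (m - 1), ∑ l ∈ Finset.Icc (B n) (m - 1), ∑ t ∈ Finset.Icc 1 m, ∑ s ∈ Finset.Icc 1 m, |g k| * |g l| * (|γ (k : ℤ)| * |γ (l : ℤ)|)
      ≤ (∑' k : ℕ, g k ^ 2) * ((m : ℝ) * (m : ℝ)) * ((∑' j : ℕ, |γ ((B n : ℤ) + (j : ℤ))|) * (∑' j : ℕ, |γ ((B n : ℤ) + (j : ℤ))|)) := by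
    have hconst : ∀ k l : ℕ, (∑ t ∈ Finset.Icc 1 m, ∑ s ∈ Finset.Icc 1 m,
        |g k| * |g l| * (|γ (k : ℤ)| * |γ (l : ℤ)|))
        = (m : ℝ) * (m : ℝ) * (|g k| * |g l| * (|γ (k : ℤ)| * |γ (l : ℤ)|)) := by
      intro k l
      rw [Finset.sum_const, Finset.sum_const, nsmul_eq_mul, nsmul_eq_mul, hUcard]
      ring
    calc ∑ k ∈ Finset.Icc (B n) (m - 1), ∑ l ∈ Finset.Icc (B n) (m - 1), ∑ t ∈ Finset.Icc 1 m, ∑ s ∈ Finset.Icc 1 m, |g k| * |g l| * (|γ (k : ℤ)| * |γ (l : ℤ)|)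
        = ∑ k ∈ Finset.Icc (B n) (m - 1), ∑ l ∈ Finset.Icc (B n) (m - 1), (m : ℝ) * (m : ℝ) * (|g k| * |g l| * (|γ (k : ℤ)| * |γ (l : ℤ)|)) :=
          Finset.sum_congr rfl fun k _ => Finset.sum_congr rfl fun l _ => hconst k l
      _ ≤ ∑ k ∈ Finset.Icc (B n) (m - 1), ∑ l ∈ Finset.Icc (B n) (m - 1), (m : ℝ) * (m : ℝ) * ((∑' k : ℕ, g k ^ 2) * (|γ (k : ℤ)| * |γ (l : ℤ)|)) := by
          refine Finset.sum_le_sum fun k _ => Finset.sum_le_sum fun l _ => ?_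
          refine mul_le_mul_of_nonneg_left ?_ (mul_nonneg hm0' hm0')
          exact mul_le_mul_of_nonneg_right (hgCg k l) (mul_nonneg (abs_nonneg _) (abs_nonneg _))
      _ = ((m : ℝ) * (m : ℝ) * (∑' k : ℕ, g k ^ 2)) *
            ((∑ k ∈ Finset.Icc (B n) (m - 1), |γ (k : ℤ)|) * (∑ l ∈ Finset.Icc (B n) (m - 1), |γ (l : ℤ)|)) := by
          rw [Finset.sum_mul_sum, Finset.mul_sum]
          refine Finset.sum_congr rfl fun k _ => ?_
          rw [Finset.mul_sum]
          exact Finset.sum_congr rfl fun l _ => by ring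
      _ ≤ ((m : ℝ) * (m : ℝ) * (∑' k : ℕ, g k ^ 2)) * ((∑' j : ℕ, |γ ((B n : ℤ) + (j : ℤ))|) * (∑' j : ℕ, |γ ((B n : ℤ) + (j : ℤ))|)) := by
          refine mul_le_mul_of_nonneg_left ?_
            (mul_nonneg (mul_nonneg hm0' hm0') hCg20)
          exact mul_le_mul hKγ hKγ (Finset.sum_nonneg fun _ _ => abs_nonneg _) (htga0 n)
      _ = (∑' k : ℕ, g k ^ 2) * ((m : ℝ) * (m : ℝ)) * ((∑' j : ℕ, |γ ((B n : ℤ) + (j : ℤ))|) * (∑' j : ℕ, |γ ((B n : ℤ) + (j : ℤ))|)) := by ring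
  -- put everything together
  rw [core]
  have bound1 : ∑ k ∈ Finset.Icc (B n) (m - 1), ∑ l ∈ Finset.Icc (B n) (m - 1), ∑ t ∈ Finset.Icc 1 (m - k), ∑ s ∈ Finset.Icc 1 (m - l), g k * g l * ∫ ω, X (t : ℤ) ω * X ((t : ℤ) + (k : ℤ)) ω * X (s : ℤ) ω * X ((s : ℤ) + (l : ℤ)) ω ∂μ ≤ ∑ k ∈ Finset.Icc (B n) (m - 1), ∑ l ∈ Finset.Icc (B n) (m - 1), ∑ t ∈ Finset.Icc 1 (m - k), ∑ s ∈ Finset.Icc 1 (m - l), (|g k| * |g l| * |cum4 (k : ℤ) ((s : ℤ) - (t : ℤ)) ((s : ℤ) - (t : ℤ) + (l : ℤ))| + |g k| * |g l| * (|γ (k : ℤ)| * |γ (l : ℤ)|) + |g k| * |g l| * (|γ ((s : ℤ) - (t : ℤ))| * |γ ((s : ℤ) - (t : ℤ) + (l : ℤ) - (k : ℤ))|) + |g k| * |g l| * (|γ ((s : ℤ) - (t : ℤ) + (l : ℤ))| * |γ ((s : ℤ) - (t : ℤ) - (k : ℤ))|)) := by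
    refine Finset.sum_le_sum fun k _ => Finset.sum_le_sum fun l _ =>
      Finset.sum_le_sum fun t _ => Finset.sum_le_sum fun s _ => ?_
    calc g k * g l * (∫ ω, X (t : ℤ) ω * X ((t : ℤ) + (k : ℤ)) ω * X (s : ℤ) ω * X ((s : ℤ) + (l : ℤ)) ω ∂μ)
        ≤ |g k * g l * (∫ ω, X (t : ℤ) ω * X ((t : ℤ) + (k : ℤ)) ω * X (s : ℤ) ω * X ((s : ℤ) + (l : ℤ)) ω ∂μ)| := le_abs_self _
      _ = |g k| * |g l| * |∫ ω, X (t : ℤ) ω * X ((t : ℤ) + (k : ℤ)) ω * X (s : ℤ) ω * X ((s : ℤ) + (l : ℤ)) ω ∂μ| := by rw [abs_mul, abs_mul]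
      _ ≤ |g k| * |g l| * (|cum4 (k : ℤ) ((s : ℤ) - (t : ℤ)) ((s : ℤ) - (t : ℤ) + (l : ℤ))| + |γ (k : ℤ)| * |γ (l : ℤ)| + |γ ((s : ℤ) - (t : ℤ))| * |γ ((s : ℤ) - (t : ℤ) + (l : ℤ) - (k : ℤ))| + |γ ((s : ℤ) - (t : ℤ) + (l : ℤ))| * |γ ((s : ℤ) - (t : ℤ) - (k : ℤ))|) :=
          mul_le_mul_of_nonneg_left (E4bound (k : ℤ) (l : ℤ) (t : ℤ) (s : ℤ))
            (mul_nonneg (abs_nonneg _) (abs_nonneg _))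
      _ = |g k| * |g l| * |cum4 (k : ℤ) ((s : ℤ) - (t : ℤ)) ((s : ℤ) - (t : ℤ) + (l : ℤ))| + |g k| * |g l| * (|γ (k : ℤ)| * |γ (l : ℤ)|) + |g k| * |g l| * (|γ ((s : ℤ) - (t : ℤ))| * |γ ((s : ℤ) - (t : ℤ) + (l : ℤ) - (k : ℤ))|) + |g k| * |g l| * (|γ ((s : ℤ) - (t : ℤ) + (l : ℤ))| * |γ ((s : ℤ) - (t : ℤ) - (k : ℤ))|) := by ring
  have bound2 : ∑ k ∈ Finset.Icc (B n) (m - 1), ∑ l ∈ Finset.Icc (B n) (m - 1), ∑ t ∈ Finset.Icc 1 (m - k), ∑ s ∈ Finset.Icc 1 (m - l), (|g k| * |g l| * |cum4 (k : ℤ) ((s : ℤ) - (t : ℤ)) ((s : ℤ) - (t : ℤ) + (l : ℤ))| + |g k| * |g l| * (|γ (k : ℤ)| * |γ (l : ℤ)|) + |g k| * |g l| * (|γ ((s : ℤ) - (t : ℤ))| * |γ ((s : ℤ) - (t : ℤ) + (l : ℤ) - (k : ℤ))|) + |g k| * |g l| * (|γ ((s : ℤ) - (t : ℤ) + (l : ℤ))|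 * |γ ((s : ℤ) - (t : ℤ) - (k : ℤ))|)) ≤ ∑ k ∈ Finset.Icc (B n) (m - 1), ∑ l ∈ Finset.Icc (B n) (m - 1), ∑ t ∈ Finset.Icc 1 m, ∑ s ∈ Finset.Icc 1 m, (|g k| * |g l| * |cum4 (k : ℤ) ((s : ℤ) - (t : ℤ)) ((s : ℤ) - (t : ℤ) + (l : ℤ))| + |g k| * |g l| * (|γ (k : ℤ)| * |γ (l : ℤ)|) + |g k| * |g l| * (|γ ((s : ℤ) - (t : ℤ))| * |γ ((s : ℤ) - (t : ℤ) + (l : ℤ) - (k : ℤ))|) + |g k| * |g l| * (|γ ((s : ℤ) - (t : ℤ) + (l : ℤ))| * |γ ((s : ℤ) - (t : ℤ) - (k : ℤ))|)) := by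
    refine enlarge_sum (fun j => Finset.Icc 1 (m - j)) hTsub _ (fun k l t s => ?_)
    positivity
  have split : ∑ k ∈ Finset.Icc (B n) (m - 1), ∑ l ∈ Finset.Icc (B n) (m - 1), ∑ t ∈ Finset.Icc 1 m, ∑ s ∈ Finset.Icc 1 m, (|g k| * |g l| * |cum4 (k : ℤ) ((s : ℤ) - (t : ℤ)) ((s : ℤ) - (t : ℤ) + (l : ℤ))| + |g k| * |g l| * (|γ (k : ℤ)| * |γ (l : ℤ)|) + |g k| * |g l| * (|γ ((s : ℤ) - (t : ℤ))| * |γ ((s : ℤ) - (t : ℤ) + (l : ℤ) - (k : ℤ))|) + |g k| * |g l| * (|γ ((s : ℤ) - (t : ℤ) + (l : ℤ))| * |γ ((s : ℤ) - (t : ℤ) - (k : ℤ))|))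
      = ∑ k ∈ Finset.Icc (B n) (m - 1), ∑ l ∈ Finset.Icc (B n) (m - 1), ∑ t ∈ Finset.Icc 1 m, ∑ s ∈ Finset.Icc 1 m, |g k| * |g l| * |cum4 (k : ℤ) ((s : ℤ) - (t : ℤ)) ((s : ℤ) - (t : ℤ) + (l : ℤ))| + ∑ k ∈ Finset.Icc (B n) (m - 1), ∑ l ∈ Finset.Icc (B n) (m - 1), ∑ t ∈ Finset.Icc 1 m, ∑ s ∈ Finset.Icc 1 m, |g k| * |g l| * (|γ (k : ℤ)| * |γ (l : ℤ)|)
        + ∑ k ∈ Finset.Icc (B n) (m - 1), ∑ l ∈ Finset.Icc (B n) (m - 1), ∑ t ∈ Finset.Icc 1 m, ∑ s ∈ Finset.Icc 1 m, |g k| * |g l| * (|γ ((s : ℤ) - (t : ℤ))| * |γ ((s : ℤ) - (t : ℤ) + (l : ℤ) - (k : ℤ))|) + ∑ k ∈ Finset.Icc (B n) (m - 1), ∑ l ∈ Finset.Icc (B n) (m - 1), ∑ t ∈ Finset.Icc 1 m, ∑ s ∈ Finset.Icc 1 m, |g k| * |g l| * (|γ ((s : ℤ) - (t : ℤ) + (l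 : ℤ))| * |γ ((s : ℤ) - (t : ℤ) - (k : ℤ))|) := by
    simp only [Finset.sum_add_distrib]
  have happ : (∑' j : ℕ, g (B n + j) ^ 2) * ((m : ℝ) * (∑' p : ℤ × ℤ × ℤ, |cum4 p.1 p.2.1 p.2.2|))
      + (∑' k : ℕ, g k ^ 2) * ((m : ℝ) * (m : ℝ)) * ((∑' j : ℕ, |γ ((B n : ℤ) + (j : ℤ))|) * (∑' j : ℕ, |γ ((B n : ℤ) + (j : ℤ))|))
      + (∑' j : ℕ, g (B n + j) ^ 2) * ((m : ℝ) * ((∑' k : ℤ, |γ k|) * (∑' k : ℤ, |γ k|)))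
      + (∑' j : ℕ, g (B n + j) ^ 2) * ((m : ℝ) * ((∑' k : ℤ, |γ k|) * (∑' k : ℤ, |γ k|))) ≤ ε * n := by
    have hbB := hN₀ n hn
    have e1 : Real.sqrt (n : ℝ) ^ 2 = (n : ℝ) := Real.sq_sqrt (Nat.cast_nonneg n)
    have hn0' : (0 : ℝ) ≤ (n : ℝ) := Nat.cast_nonneg n
    have hD0 : (0 : ℝ) ≤ 2 * ((∑' k : ℤ, |γ k|) * (∑' k : ℤ, |γ k|)) + (∑' p : ℤ × ℤ × ℤ, |cum4 p.1 p.2.1 p.2.2|) :=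
      add_nonneg (mul_nonneg (by norm_num) (mul_nonneg hΓ0 hΓ0)) hCc0
    have hA1 : (∑' k : ℕ, g k ^ 2) * ((m : ℝ) * (m : ℝ)) * ((∑' j : ℕ, |γ ((B n : ℤ) + (j : ℤ))|) * (∑' j : ℕ, |γ ((B n : ℤ) + (j : ℤ))|))
        ≤ (n : ℝ) * ((∑' k : ℕ, g k ^ 2) * (Real.sqrt n * (∑' j : ℕ, |γ ((B n : ℤ) + (j : ℤ))|)) ^ 2) := by
      have h2 : (Real.sqrt (n : ℝ) * (∑' j : ℕ, |γ ((B n : ℤ) + (j : ℤ))|)) ^ 2 = (n : ℝ) * ((∑' j : ℕ, |γ ((B n : ℤ) + (j : ℤ))|) * (∑' j : ℕ, |γ ((B n : ℤ) + (j : ℤ))|)) := by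
        rw [mul_pow, e1]; ring
      rw [h2]
      calc (∑' k : ℕ, g k ^ 2) * ((m : ℝ) * (m : ℝ)) * ((∑' j : ℕ, |γ ((B n : ℤ) + (j : ℤ))|) * (∑' j : ℕ, |γ ((B n : ℤ) + (j : ℤ))|))
          = ((∑' k : ℕ, g k ^ 2) * ((∑' j : ℕ, |γ ((B n : ℤ) + (j : ℤ))|) * (∑' j : ℕ, |γ ((B n : ℤ) + (j : ℤ))|))) * ((m : ℝ) * (m : ℝ)) := by ring
        _ ≤ ((∑' k : ℕ, g k ^ 2) * ((∑' j : ℕ, |γ ((B n : ℤ) + (j : ℤ))|) * (∑' j : ℕ, |γ ((B n : ℤ) + (j : ℤ))|))) * ((n : ℝ) * (n : ℝ)) :=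
            mul_le_mul_of_nonneg_left (mul_self_le_mul_self hm0' hmn')
              (mul_nonneg hCg20 (mul_nonneg (htga0 n) (htga0 n)))
        _ = (n : ℝ) * ((∑' k : ℕ, g k ^ 2) * ((n : ℝ) * ((∑' j : ℕ, |γ ((B n : ℤ) + (j : ℤ))|) * (∑' j : ℕ, |γ ((B n : ℤ) + (j : ℤ))|)))) := by ring
    have hA234 : (∑' j : ℕ, g (B n + j) ^ 2) * ((m : ℝ) * (∑' p : ℤ × ℤ × ℤ, |cum4 p.1 p.2.1 p.2.2|))
        + (∑' j : ℕ, g (B n + j) ^ 2) * ((m : ℝ) * ((∑' k : ℤ, |γ k|) * (∑' k : ℤ, |γ k|)))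
        + (∑' j : ℕ, g (B n + j) ^ 2) * ((m : ℝ) * ((∑' k : ℤ, |γ k|) * (∑' k : ℤ, |γ k|)))
        ≤ (n : ℝ) * ((∑' j : ℕ, g (B n + j) ^ 2) * (2 * ((∑' k : ℤ, |γ k|) * (∑' k : ℤ, |γ k|)) + (∑' p : ℤ × ℤ × ℤ, |cum4 p.1 p.2.1 p.2.2|))) := by
      have hre : (∑' j : ℕ, g (B n + j) ^ 2) * ((m : ℝ) * (∑' p : ℤ × ℤ × ℤ, |cum4 p.1 p.2.1 p.2.2|))
          + (∑' j : ℕ, g (B n + j) ^ 2) * ((m : ℝ) * ((∑' k : ℤ, |γ k|) * (∑' k : ℤ, |γ k|)))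
          + (∑' j : ℕ, g (B n + j) ^ 2) * ((m : ℝ) * ((∑' k : ℤ, |γ k|) * (∑' k : ℤ, |γ k|)))
          = (m : ℝ) * ((∑' j : ℕ, g (B n + j) ^ 2) * (2 * ((∑' k : ℤ, |γ k|) * (∑' k : ℤ, |γ k|)) + (∑' p : ℤ × ℤ × ℤ, |cum4 p.1 p.2.1 p.2.2|))) := by ring
      rw [hre]
      exact mul_le_mul_of_nonneg_right hmn' (mul_nonneg (htau0 n) hD0)
    have hfin := mul_le_mul_of_nonneg_left (le_of_lt hbB) hn0'
    linarith [hA1, hA234, hfin]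
  calc ∑ k ∈ Finset.Icc (B n) (m - 1), ∑ l ∈ Finset.Icc (B n) (m - 1), ∑ t ∈ Finset.Icc 1 (m - k), ∑ s ∈ Finset.Icc 1 (m - l), g k * g l * ∫ ω, X (t : ℤ) ω * X ((t : ℤ) + (k : ℤ)) ω * X (s : ℤ) ω * X ((s : ℤ) + (l : ℤ)) ω ∂μ
      ≤ ∑ k ∈ Finset.Icc (B n) (m - 1), ∑ l ∈ Finset.Icc (B n) (m - 1), ∑ t ∈ Finset.Icc 1 (m - k), ∑ s ∈ Finset.Icc 1 (m - l), (|g k| * |g l| * |cum4 (k : ℤ) ((s : ℤ) - (t : ℤ)) ((s : ℤ) - (t : ℤ) + (l : ℤ))| + |g k| * |g l| * (|γ (k : ℤ)| * |γ (l : ℤ)|) + |g k| * |g l| * (|γ ((s : ℤ) - (t : ℤ))| * |γ ((s : ℤ) - (t : ℤ) + (l : ℤ) - (k : ℤ))|) + |g k| * |g l| * (|γ ((s : ℤ) - (t : ℤ) + (l : ℤ))| * |γ ((s : ℤ) - (t : ℤ) - (k : ℤ))|)) := bound1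
    _ ≤ ∑ k ∈ Finset.Icc (B n) (m - 1), ∑ l ∈ Finset.Icc (B n) (m - 1), ∑ t ∈ Finset.Icc 1 m, ∑ s ∈ Finset.Icc 1 m, (|g k| * |g l| * |cum4 (k : ℤ) ((s : ℤ) - (t : ℤ)) ((s : ℤ) - (t : ℤ) + (l : ℤ))| + |g k| * |g l| * (|γ (k : ℤ)| * |γ (l : ℤ)|) + |g k| * |g l| * (|γ ((s : ℤ) - (t : ℤ))| * |γ ((s : ℤ) - (t : ℤ) + (l : ℤ) - (k : ℤ))|) + |g k| * |g l| * (|γ ((s : ℤ) - (t : ℤ) + (l : ℤ))| * |γ ((s : ℤ) - (t : ℤ) - (k : ℤ))|)) := bound2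
    _ = ∑ k ∈ Finset.Icc (B n) (m - 1), ∑ l ∈ Finset.Icc (B n) (m - 1), ∑ t ∈ Finset.Icc 1 m, ∑ s ∈ Finset.Icc 1 m, |g k| * |g l| * |cum4 (k : ℤ) ((s : ℤ) - (t : ℤ)) ((s : ℤ) - (t : ℤ) + (l : ℤ))| + ∑ k ∈ Finset.Icc (B n) (m - 1), ∑ l ∈ Finset.Icc (B n) (m - 1), ∑ t ∈ Finset.Icc 1 m, ∑ s ∈ Finset.Icc 1 m, |g k| * |g l| * (|γ (k : ℤ)| * |γ (l : ℤ)|)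
        + ∑ k ∈ Finset.Icc (B n) (m - 1), ∑ l ∈ Finset.Icc (B n) (m - 1), ∑ t ∈ Finset.Icc 1 m, ∑ s ∈ Finset.Icc 1 m, |g k| * |g l| * (|γ ((s : ℤ) - (t : ℤ))| * |γ ((s : ℤ) - (t : ℤ) + (l : ℤ) - (k : ℤ))|) + ∑ k ∈ Finset.Icc (B n) (m - 1), ∑ l ∈ Finset.Icc (B n) (m - 1), ∑ t ∈ Finset.Icc 1 m, ∑ s ∈ Finset.Icc 1 m, |g k| * |g l| * (|γ ((s : ℤ) - (t : ℤ) + (l : ℤ))| * |γ ((s : ℤ) - (t : ℤ) - (k : ℤ))|) := split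
    _ ≤ (∑' j : ℕ, g (B n + j) ^ 2) * ((m : ℝ) * (∑' p : ℤ × ℤ × ℤ, |cum4 p.1 p.2.1 p.2.2|))
        + (∑' k : ℕ, g k ^ 2) * ((m : ℝ) * (m : ℝ)) * ((∑' j : ℕ, |γ ((B n : ℤ) + (j : ℤ))|) * (∑' j : ℕ, |γ ((B n : ℤ) + (j : ℤ))|))
        + (∑' j : ℕ, g (B n + j) ^ 2) * ((m : ℝ) * ((∑' k : ℤ, |γ k|) * (∑' k : ℤ, |γ k|)))
        + (∑' j : ℕ, g (B n + j) ^ 2) * ((m : ℝ) * ((∑' k : ℤ, |γ k|) * (∑' k : ℤ, |γ k|))) := by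
          refine add_le_add (add_le_add (add_le_add hSc hS1) hS2) hS3
    _ ≤ ε * n := happ
end

section
/- Under the stationary setup, assume $\Gamma := \sum_{k\in\mathbb{Z}}|\gamma(k)| < \infty$ and $S := \sum_{(a,b,c)\in\mathbb{Z}^3}|\mathrm{cum}_4(a,b,c)| < \infty$. Then there exists a constant $C$, depending only on $\Gamma$ and $S$, such that for all real sequences $(g_k)_{k\ge 1}$ with $\sum_{k=1}^{\infty} g_k^2 < \infty$ and all integers $1 \le B \le K$ and $m \ge 1$, the random variable $S_{m} := \sum_{k=B}^{K} g_k \sum_{t=1}^{m} X_t X_{t-k}$ satisfies $\mathrm{Var}(S_m) = \mathbb{E}\big[(S_m - \mathbb{E} S_m)^2\big] \;\le\; C\, m \sum_{k=B}^{\infty} g_k^2.$ -/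
open MeasureTheory Filter
open scoped ENNReal

private lemma integrable_mul_of_memL2 {Ω : Type*} [MeasurableSpace Ω] {μ : Measure Ω}
    {F G : Ω → ℝ} (hF : MemLp F 2 μ) (hG : MemLp G 2 μ) :
    Integrable (fun ω => F ω * G ω) μ := by
  have h11 : (1 : ℝ≥0∞) / 1 = 1 / 2 + 1 / 2 := by
    simp only [one_div]
    rw [ENNReal.inv_two_add_inv_two, inv_one]
  have := hG.smul hF (r := 1) (hpqr := ⟨by simpa [one_div] using h11.symm⟩)
  rw [memLp_one_iff_integrable] at this
  simpa [smul_eq_mul, Pi.mul_def] using this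

private lemma integral_centered_mul {Ω : Type*} [MeasurableSpace Ω] {μ : Measure Ω}
    [IsProbabilityMeasure μ] {Y1 Y2 : Ω → ℝ} {c1 c2 a1 a2 : ℝ}
    (h1 : MemLp Y1 2 μ) (h2 : MemLp Y2 2 μ)
    (hc1 : ∫ ω, Y1 ω ∂μ = c1) (hc2 : ∫ ω, Y2 ω ∂μ = c2) :
    ∫ ω, (a1 * (Y1 ω - c1)) * (a2 * (Y2 ω - c2)) ∂μ
      = a1 * a2 * ((∫ ω, Y1 ω * Y2 ω ∂μ) - c1 * c2) := by
  have hmul : Integrable (fun ω => Y1 ω * Y2 ω) μ := integrable_mul_of_memL2 h1 h2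
  have hY1 : Integrable Y1 μ := h1.integrable one_le_two
  have hY2 : Integrable Y2 μ := h2.integrable one_le_two
  have hb : Integrable (fun ω => c1 * Y2 ω) μ := hY2.const_mul _
  have hcc : Integrable (fun ω => c2 * Y1 ω) μ := hY1.const_mul _
  have hpt : ∀ ω, (a1 * (Y1 ω - c1)) * (a2 * (Y2 ω - c2))
      = a1 * a2 * (Y1 ω * Y2 ω - c1 * Y2 ω - c2 * Y1 ω + c1 * c2) := fun ω => by ring
  simp_rw [hpt]
  rw [integral_const_mul]
  congr 1
  have e1 : ∫ ω, (Y1 ω * Y2 ω - c1 * Y2 ω - c2 * Y1 ω + c1 * c2) ∂μ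
      = (∫ ω, (Y1 ω * Y2 ω - c1 * Y2 ω - c2 * Y1 ω) ∂μ) + ∫ _ω, (c1 * c2) ∂μ :=
    integral_add ((hmul.sub hb).sub hcc) (integrable_const _)
  have e2 : ∫ ω, (Y1 ω * Y2 ω - c1 * Y2 ω - c2 * Y1 ω) ∂μ
      = (∫ ω, (Y1 ω * Y2 ω - c1 * Y2 ω) ∂μ) - ∫ ω, c2 * Y1 ω ∂μ :=
    integral_sub (hmul.sub hb) hcc
  have e3 : ∫ ω, (Y1 ω * Y2 ω - c1 * Y2 ω) ∂μ
      = (∫ ω, Y1 ω * Y2 ω ∂μ) - ∫ ω, c1 * Y2 ω ∂μ := integral_sub hmul hb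
  rw [e1, e2, e3, integral_const_mul, integral_const_mul, integral_const, hc1, hc2]
  simp only [probReal_univ, measure_univ, ENNReal.toReal_one, smul_eq_mul, one_mul]
  ring

private lemma sum_tsum_le_tsum_prod {α : Type*} {φ : α × ℤ → ℝ}
    (hφ : Summable φ) (hφ0 : ∀ x, 0 ≤ φ x) (Q : Finset α) :
    ∑ x ∈ Q, ∑' u : ℤ, φ (x, u) ≤ ∑' p, φ p := by
  obtain ⟨hin, hout⟩ := (summable_prod_of_nonneg (fun x => hφ0 x)).mp hφ
  calc ∑ x ∈ Q, ∑' u : ℤ, φ (x, u)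
      ≤ ∑' x, ∑' u, φ (x, u) :=
        Summable.sum_le_tsum Q (fun x _ => tsum_nonneg fun u => hφ0 _) hout
    _ = ∑' p, φ p := (Summable.tsum_prod' hφ hin).symm

private lemma sum_tsum_comp_le {α β : Type*} {ψ : β → ℝ} (hψ : Summable ψ)
    (hψ0 : ∀ x, 0 ≤ ψ x) (e : α × ℤ → β) (he : Function.Injective e) (Q : Finset α) :
    ∑ x ∈ Q, ∑' u : ℤ, ψ (e (x, u)) ≤ ∑' p, ψ p := by
  have hc : Summable (ψ ∘ e) := hψ.comp_injective he
  have h1 : ∑ x ∈ Q, ∑' u : ℤ, ψ (e (x, u)) ≤ ∑' p : α × ℤ, ψ (e p) :=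
    sum_tsum_le_tsum_prod hc (fun x => hψ0 _) Q
  exact h1.trans (Summable.tsum_le_tsum_of_inj e he (fun c _ => hψ0 c) (fun a => le_rfl) hc hψ)

set_option maxHeartbeats 2000000 in
/-- bound on the term `I₁`: for a strictly stationary mean-zero sequence
`X t = X0 ∘ T t` with `Γ = ∑|γ(k)| < ∞` and `S = ∑|cum₄| < ∞`, there is a constant `C`
(depending only on `Γ` and `S`) such that for all square-summable weights `(g_k)`,
all `1 ≤ B ≤ K` and `m ≥ 1`, the variable
`Sₘ = ∑_{k=B}^{K} g_k ∑_{t=1}^{m} Xₜ X_{t−k}` satisfies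
`Var(Sₘ) ≤ C m ∑_{k=B}^∞ g_k²`. -/
theorem tail_sum_variance_bound
    {Ω : Type*} [MeasurableSpace Ω] (μ : Measure Ω) [IsProbabilityMeasure μ]
    (T : ℤ → Ω → Ω)
    (hT0 : T 0 = id)
    (hTadd : ∀ a b : ℤ, T (a + b) = T a ∘ T b)
    (hTmp : ∀ a : ℤ, MeasurePreserving (T a) μ μ)
    (X0 : Ω → ℝ) (hX0 : Measurable X0)
    (hmean : ∫ ω, X0 ω ∂μ = 0)
    (hmom4 : MemLp X0 4 μ)
    (X : ℤ → Ω → ℝ) (hX : ∀ t ω, X t ω = X0 (T t ω))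
    (γ : ℤ → ℝ) (hγ : ∀ k, γ k = ∫ ω, X 0 ω * X k ω ∂μ)
    (cum4 : ℤ → ℤ → ℤ → ℝ)
    (hcum4 : ∀ a b c, cum4 a b c =
      (∫ ω, X 0 ω * X a ω * X b ω * X c ω ∂μ)
        - γ a * γ (b - c) - γ b * γ (a - c) - γ c * γ (a - b))
    (hγsum : Summable fun k : ℤ => |γ k|)
    (hcumsum : Summable fun p : ℤ × ℤ × ℤ => |cum4 p.1 p.2.1 p.2.2|) :
    ∃ C : ℝ, ∀ g : ℕ → ℝ, Summable (fun k => g k ^ 2) →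
      ∀ B K m : ℕ, 1 ≤ B → B ≤ K → 1 ≤ m →
      (∫ ω, ((∑ k ∈ Finset.Icc B K,
            g k * ∑ t ∈ Finset.Icc 1 m, X (t : ℤ) ω * X ((t : ℤ) - (k : ℤ)) ω)
          - ∫ ω', (∑ k ∈ Finset.Icc B K,
            g k * ∑ t ∈ Finset.Icc 1 m, X (t : ℤ) ω' * X ((t : ℤ) - (k : ℤ)) ω') ∂μ) ^ 2 ∂μ)
        ≤ C * m * ∑' k : ℕ, g (B + k) ^ 2 := by
  classical
  -- infrastructure
  have hXeq : ∀ a : ℤ, X a = X0 ∘ T a := fun a => funext fun ω => hX a ω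
  have hX4 : ∀ a : ℤ, MemLp (X a) 4 μ := fun a =>
    (hXeq a) ▸ hmom4.comp_measurePreserving (hTmp a)
  have hinv1 : ∀ (t : ℤ) (ω : Ω), T (-t) (T t ω) = ω := by
    intro t ω
    have h := congrFun (hTadd (-t) t) ω
    rw [neg_add_cancel, hT0] at h
    exact h.symm
  have hemb : ∀ t : ℤ, MeasurableEmbedding (T t) := by
    intro t
    exact (MeasurableEquiv.mk ⟨T t, T (-t), hinv1 t, by
        intro ω
        have h := congrFun (hTadd t (-t)) ω
        rw [add_neg_cancel, hT0] at h
        exact h.symm⟩ ((hTmp t).measurable) ((hTmp (-t)).measurable)).measurableEmbedding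
  have hshift : ∀ (t : ℤ) (F : Ω → ℝ), ∫ ω, F (T t ω) ∂μ = ∫ ω, F ω ∂μ :=
    fun t F => (hTmp t).integral_comp (hemb t) F
  have hXshift : ∀ (a t : ℤ) (ω : Ω), X a (T t ω) = X (a + t) ω := by
    intro a t ω
    rw [hX, hX, ← Function.comp_apply (f := T a), ← hTadd]
  have h12 : (1 : ℝ≥0∞) / 2 = 1 / 4 + 1 / 4 := by
    rw [ENNReal.div_add_div_same,
      show (4:ℝ≥0∞) = 2*2 by norm_num, show (1:ℝ≥0∞)+1 = 2*1 by norm_num,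
      ENNReal.mul_div_mul_left _ _ (by norm_num) (by norm_num)]
  have hprod2 : ∀ a b : ℤ, MemLp (fun ω => X a ω * X b ω) 2 μ := by
    intro a b
    have := (hX4 b).smul (hX4 a) (r := 2) (hpqr := ⟨by simpa [one_div] using h12.symm⟩)
    simpa [smul_eq_mul, Pi.mul_def] using this
  have hint1 : ∀ (F G : Ω → ℝ), MemLp F 2 μ → MemLp G 2 μ →
      Integrable (fun ω => F ω * G ω) μ := by
    intro F G hF hG
    have h11 : (1 : ℝ≥0∞) / 1 = 1 / 2 + 1 / 2 := by
      simp only [one_div]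
      rw [ENNReal.inv_two_add_inv_two, inv_one]
    have := hG.smul hF (r := 1) (hpqr := ⟨by simpa [one_div] using h11.symm⟩)
    rw [memLp_one_iff_integrable] at this
    simpa [smul_eq_mul, Pi.mul_def] using this
  have hintX2 : ∀ a b : ℤ, Integrable (fun ω => X a ω * X b ω) μ :=
    fun a b => (hprod2 a b).integrable one_le_two
  have hγ2 : ∀ a b : ℤ, (∫ ω, X a ω * X b ω ∂μ) = γ (b - a) := by
    intro a b
    have h := hshift a (fun ω => X 0 ω * X (b - a) ω)
    simp only [hXshift, zero_add, sub_add_cancel] at h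
    rw [hγ (b - a)]
    exact h
  have hγsymm : ∀ k : ℤ, γ (-k) = γ k := by
    intro k
    have h1 : (∫ ω, X k ω * X 0 ω ∂μ) = γ (-k) := by rw [hγ2]; norm_num
    have h2 : (∫ ω, X 0 ω * X k ω ∂μ) = γ k := by rw [hγ2]; norm_num
    rw [← h1, ← h2]
    congr 1; funext ω; ring
  have hmom4eq : ∀ k l t s : ℤ,
      ∫ ω, (X t ω * X (t - k) ω) * (X s ω * X (s - l) ω) ∂μ
        = ∫ ω, X 0 ω * X (-k) ω * X (s - t) ω * X (s - t - l) ω ∂μ := by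
    intro k l t s
    have h := hshift t (fun ω => X 0 ω * X (-k) ω * X (s - t) ω * X (s - t - l) ω)
    rw [← h]
    congr 1; funext ω
    simp only [hXshift, zero_add]
    rw [show -k + t = t - k by ring, show s - t + t = s by ring,
      show s - t - l + t = s - l by ring]
    ring
  -- the constants
  set Γ : ℝ := ∑' k : ℤ, |γ k| with hΓdef
  set SS : ℝ := ∑' p : ℤ × ℤ × ℤ, |cum4 p.1 p.2.1 p.2.2| with hSSdef
  have hΓ0 : 0 ≤ Γ := tsum_nonneg fun _ => abs_nonneg _
  have hSS0 : 0 ≤ SS := tsum_nonneg fun _ => abs_nonneg _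
  have habsle : ∀ v : ℤ, |γ v| ≤ Γ := fun v => Summable.le_tsum hγsum v fun _ _ => abs_nonneg _
  -- the dominating kernel f and its partial sums
  set f : ℤ → ℤ → ℤ → ℝ := fun k l u =>
    |cum4 (-k) u (u - l)| + |γ u| * |γ (-k - (u - l))| + |γ (u - l)| * |γ (-k - u)|
    with hfdef
  have hf0 : ∀ k l u, 0 ≤ f k l u := fun k l u => by
    have h1 : (0:ℝ) ≤ |cum4 (-k) u (u - l)| := abs_nonneg _
    have h2 : (0:ℝ) ≤ |γ u| * |γ (-k - (u - l))| := mul_nonneg (abs_nonneg _) (abs_nonneg _)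
    have h3 : (0:ℝ) ≤ |γ (u - l)| * |γ (-k - u)| := mul_nonneg (abs_nonneg _) (abs_nonneg _)
    simp only [hfdef]
    linarith
  have hsum1 : ∀ k l : ℤ, Summable fun u : ℤ => |cum4 (-k) u (u - l)| := by
    intro k l
    have heq : (fun u : ℤ => |cum4 (-k) u (u - l)|)
        = (fun p : ℤ × ℤ × ℤ => |cum4 p.1 p.2.1 p.2.2|)
          ∘ (fun u : ℤ => ((-k, u, u - l) : ℤ × ℤ × ℤ)) := rfl
    rw [heq]
    refine hcumsum.comp_injective ?_
    intro a b hab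
    simpa using congrArg (fun p : ℤ × ℤ × ℤ => p.2.1) hab
  have hsum2 : ∀ k l : ℤ, Summable fun u : ℤ => |γ u| * |γ (-k - (u - l))| := by
    intro k l
    refine Summable.of_nonneg_of_le (fun u => mul_nonneg (abs_nonneg _) (abs_nonneg _))
      (fun u => mul_le_mul_of_nonneg_left (habsle _) (abs_nonneg _)) (hγsum.mul_right Γ)
  have hsum3 : ∀ k l : ℤ, Summable fun u : ℤ => |γ (u - l)| * |γ (-k - u)| := by
    intro k l
    have h' : Summable fun u : ℤ => |γ (-k - u)| := by
      have heq : (fun u : ℤ => |γ (-k - u)|) = (fun v => |γ v|) ∘ (fun u : ℤ => -k - u) := rfl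
      rw [heq]
      exact hγsum.comp_injective (fun a b hab => by omega)
    refine Summable.of_nonneg_of_le (fun u => mul_nonneg (abs_nonneg _) (abs_nonneg _))
      (fun u => mul_le_mul_of_nonneg_right (habsle _) (abs_nonneg _)) (h'.mul_left Γ)
  have hfs : ∀ k l : ℤ, Summable (f k l) :=
    fun k l => ((hsum1 k l).add (hsum2 k l)).add (hsum3 k l)
  set F : ℤ → ℤ → ℝ := fun k l => ∑' u : ℤ, f k l u with hFdef
  have hF0 : ∀ k l, 0 ≤ F k l := fun k l => tsum_nonneg fun u => hf0 k l u
  -- the covariance identity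
  have hcovid : ∀ k l t s : ℤ,
      (∫ ω, (X t ω * X (t - k) ω) * (X s ω * X (s - l) ω) ∂μ) - γ (-k) * γ (-l)
        = cum4 (-k) (s - t) (s - t - l) + γ (s - t) * γ (-k - (s - t - l))
          + γ (s - t - l) * γ (-k - (s - t)) := by
    intro k l t s
    rw [hmom4eq k l t s]
    have hc := hcum4 (-k) (s - t) (s - t - l)
    rw [show s - t - (s - t - l) = l by ring] at hc
    rw [hγsymm l]
    linear_combination -hc
  -- the covariance bound
  have habs : ∀ k l t s : ℤ,
      |(∫ ω, (X t ω * X (t - k) ω) * (X s ω * X (s - l) ω) ∂μ) - γ (-k) * γ (-l)|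
        ≤ f k l (s - t) := by
    intro k l t s
    rw [hcovid k l t s]
    refine (abs_add_three _ _ _).trans ?_
    simp only [hfdef, abs_mul]
    exact le_refl _
  -- the product summability for γ
  have hγprod : Summable fun q : ℤ × ℤ => |γ q.1| * |γ q.2| :=
    hγsum.mul_of_nonneg hγsum (fun _ => abs_nonneg _) (fun _ => abs_nonneg _)
  have hΓΓ : (∑' q : ℤ × ℤ, |γ q.1| * |γ q.2|) = Γ ^ 2 := by
    rw [sq]
    exact (Summable.tsum_mul_tsum hγsum hγsum hγprod).symm
  -- choose the constant
  refine ⟨SS + 2 * Γ ^ 2, ?_⟩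
  intro g hg B K m hB hBK hm
  set I := Finset.Icc B K with hIdef
  set J := Finset.Icc 1 m with hJdef
  set G : ℝ := ∑' j : ℕ, g (B + j) ^ 2 with hGdef
  have hGsum : Summable fun j : ℕ => g (B + j) ^ 2 := by
    have heq : (fun j : ℕ => g (B + j) ^ 2) = (fun k => g k ^ 2) ∘ (fun j => B + j) := rfl
    rw [heq]
    exact hg.comp_injective (add_right_injective B)
  have hG0 : 0 ≤ G := tsum_nonneg fun _ => sq_nonneg _
  have hg2G : ∀ k ∈ I, g k ^ 2 ≤ G := by
    intro k hk
    have hBk : B ≤ k := (Finset.mem_Icc.mp hk).1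
    have heq : g k ^ 2 = g (B + (k - B)) ^ 2 := by rw [Nat.add_sub_cancel' hBk]
    rw [heq]
    exact Summable.le_tsum hGsum (k - B) fun _ _ => sq_nonneg _
  have hsumI : ∑ k ∈ I, g k ^ 2 ≤ G := by
    have hmap : I = Finset.map (addLeftEmbedding B) (Finset.Icc 0 (K - B)) := by
      rw [Finset.map_add_left_Icc, Nat.add_zero, Nat.add_sub_cancel' hBK]
    rw [hmap, Finset.sum_map]
    exact Summable.sum_le_tsum _ (fun _ _ => sq_nonneg _) hGsum
  have hgghalf : ∀ k l : ℕ, |g k * g l| ≤ (g k ^ 2 + g l ^ 2) / 2 := by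
    intro k l
    rw [abs_mul]
    have h2 := two_mul_le_add_sq |g k| |g l|
    rw [sq_abs, sq_abs] at h2
    linarith
  have hggG : ∀ k ∈ I, ∀ l ∈ I, |g k * g l| ≤ G := by
    intro k hk l hl
    have h1 := hg2G k hk
    have h2 := hg2G l hl
    have h3 := hgghalf k l
    linarith
  -- centered variables
  set c : ℕ → ℝ := fun k => γ (-(k : ℤ)) with hcdef
  set Z : ℕ × ℕ → Ω → ℝ := fun p ω =>
    g p.1 * (X (p.2 : ℤ) ω * X ((p.2 : ℤ) - (p.1 : ℤ)) ω - c p.1) with hZdef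
  set P := I ×ˢ J with hPdef
  have hZ2 : ∀ p : ℕ × ℕ, MemLp (Z p) 2 μ := by
    intro p
    exact ((hprod2 _ _).sub (memLp_const _)).const_mul _
  have hZZint : ∀ p q : ℕ × ℕ, Integrable (fun ω => Z p ω * Z q ω) μ :=
    fun p q => hint1 _ _ (hZ2 p) (hZ2 q)
  have hEY : ∀ k t : ℕ, (∫ ω, X (t : ℤ) ω * X ((t : ℤ) - (k : ℤ)) ω ∂μ) = c k := by
    intro k t
    rw [hγ2]
    congr 1
    ring
  have hcardJ : (J.card : ℝ) = (m : ℝ) := by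
    rw [hJdef, Nat.card_Icc]
    norm_num
  have hEW : (∫ ω', (∑ k ∈ I, g k * ∑ t ∈ J, X (t : ℤ) ω' * X ((t : ℤ) - (k : ℤ)) ω') ∂μ)
      = ∑ k ∈ I, g k * ((m : ℝ) * c k) := by
    rw [integral_finset_sum _
      (fun k _ => ((integrable_finset_sum J (fun t _ => hintX2 _ _)).const_mul _))]
    refine Finset.sum_congr rfl fun k _ => ?_
    rw [integral_const_mul, integral_finset_sum _ (fun t _ => hintX2 _ _)]
    congr 1
    rw [Finset.sum_congr rfl fun t _ => hEY k t, Finset.sum_const, nsmul_eq_mul, hcardJ]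
  have hWcent : ∀ ω : Ω,
      (∑ k ∈ I, g k * ∑ t ∈ J, X (t : ℤ) ω * X ((t : ℤ) - (k : ℤ)) ω)
        - (∫ ω', (∑ k ∈ I, g k * ∑ t ∈ J, X (t : ℤ) ω' * X ((t : ℤ) - (k : ℤ)) ω') ∂μ)
      = ∑ p ∈ P, Z p ω := by
    intro ω
    rw [hEW, hPdef, Finset.sum_product, ← Finset.sum_sub_distrib]
    refine Finset.sum_congr rfl fun k _ => ?_
    simp only [hZdef]
    rw [Finset.mul_sum]
    rw [show ∀ S : Finset ℕ, ∑ t ∈ S, g k * (X (t : ℤ) ω * X ((t : ℤ) - (k : ℤ)) ω - c k)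
        = ∑ t ∈ S, (g k * (X (t : ℤ) ω * X ((t : ℤ) - (k : ℤ)) ω) - g k * c k)
      from fun S => Finset.sum_congr rfl fun t _ => by ring]
    rw [Finset.sum_sub_distrib, Finset.sum_const, nsmul_eq_mul, hcardJ, ← Finset.mul_sum]
    ring
  -- variance expansion
  have hVar : (∫ ω, ((∑ k ∈ I, g k * ∑ t ∈ J, X (t : ℤ) ω * X ((t : ℤ) - (k : ℤ)) ω)
          - ∫ ω', (∑ k ∈ I, g k * ∑ t ∈ J, X (t : ℤ) ω' * X ((t : ℤ) - (k : ℤ)) ω') ∂μ) ^ 2 ∂μ)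
      = ∑ p ∈ P, ∑ q ∈ P, ∫ ω, Z p ω * Z q ω ∂μ := by
    have h1 : ∀ ω : Ω, ((∑ k ∈ I, g k * ∑ t ∈ J, X (t : ℤ) ω * X ((t : ℤ) - (k : ℤ)) ω)
          - ∫ ω', (∑ k ∈ I, g k * ∑ t ∈ J, X (t : ℤ) ω' * X ((t : ℤ) - (k : ℤ)) ω') ∂μ) ^ 2
        = ∑ p ∈ P, ∑ q ∈ P, Z p ω * Z q ω := by
      intro ω
      rw [hWcent ω, sq, Finset.sum_mul_sum]
    simp_rw [h1]
    rw [integral_finset_sum _ (fun p _ => integrable_finset_sum _ (fun q _ => hZZint p q))]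
    exact Finset.sum_congr rfl fun p _ => integral_finset_sum _ (fun q _ => hZZint p q)
  -- value of each covariance term
  have hZval : ∀ k t l s : ℕ,
      (∫ ω, Z (k, t) ω * Z (l, s) ω ∂μ)
        = g k * g l * ((∫ ω, (X (t : ℤ) ω * X ((t : ℤ) - (k : ℤ)) ω)
              * (X (s : ℤ) ω * X ((s : ℤ) - (l : ℤ)) ω) ∂μ) - c k * c l) := by
    intro k t l s
    simp only [hZdef]
    exact integral_centered_mul (hprod2 _ _) (hprod2 _ _) (hEY k t) (hEY l s)
  -- per-term bound
  have hterm : ∀ p ∈ P, ∀ q ∈ P,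
      (∫ ω, Z p ω * Z q ω ∂μ)
        ≤ |g p.1 * g q.1| * f (p.1 : ℤ) (q.1 : ℤ) ((q.2 : ℤ) - (p.2 : ℤ)) := by
    intro p _ q _
    have h0 : (∫ ω, Z p ω * Z q ω ∂μ) = ∫ ω, Z (p.1, p.2) ω * Z (q.1, q.2) ω ∂μ := rfl
    rw [h0, hZval p.1 p.2 q.1 q.2]
    have h1 := habs (p.1 : ℤ) (q.1 : ℤ) (p.2 : ℤ) (q.2 : ℤ)
    calc g p.1 * g q.1 * ((∫ ω, (X (p.2 : ℤ) ω * X ((p.2 : ℤ) - (p.1 : ℤ)) ω)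
              * (X (q.2 : ℤ) ω * X ((q.2 : ℤ) - (q.1 : ℤ)) ω) ∂μ) - c p.1 * c q.1)
        ≤ |g p.1 * g q.1 * ((∫ ω, (X (p.2 : ℤ) ω * X ((p.2 : ℤ) - (p.1 : ℤ)) ω)
              * (X (q.2 : ℤ) ω * X ((q.2 : ℤ) - (q.1 : ℤ)) ω) ∂μ) - c p.1 * c q.1)| :=
          le_abs_self _
      _ = |g p.1 * g q.1| * |(∫ ω, (X (p.2 : ℤ) ω * X ((p.2 : ℤ) - (p.1 : ℤ)) ω)
              * (X (q.2 : ℤ) ω * X ((q.2 : ℤ) - (q.1 : ℤ)) ω) ∂μ) - c p.1 * c q.1| :=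
          abs_mul _ _
      _ ≤ |g p.1 * g q.1| * f (p.1 : ℤ) (q.1 : ℤ) ((q.2 : ℤ) - (p.2 : ℤ)) := by
          exact mul_le_mul_of_nonneg_left h1 (abs_nonneg _)
  -- inner double sum bound
  have hdouble : ∀ k l : ℤ, ∑ t ∈ J, ∑ s ∈ J, f k l ((s : ℤ) - (t : ℤ)) ≤ (m : ℝ) * F k l := by
    intro k l
    have hrow : ∀ t : ℕ, ∑ s ∈ J, f k l ((s : ℤ) - (t : ℤ)) ≤ F k l := by
      intro t
      have heq : ∑ s ∈ J, f k l ((s : ℤ) - (t : ℤ))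
          = ∑ u ∈ J.map ⟨fun s : ℕ => (s : ℤ) - (t : ℤ), by intro a b hab; simp only at hab; omega⟩, f k l u := by
        rw [Finset.sum_map]
        rfl
      rw [heq]
      exact Summable.sum_le_tsum _ (fun _ _ => hf0 _ _ _) (hfs k l)
    calc ∑ t ∈ J, ∑ s ∈ J, f k l ((s : ℤ) - (t : ℤ))
        ≤ ∑ _t ∈ J, F k l := Finset.sum_le_sum fun t _ => hrow t
      _ = (m : ℝ) * F k l := by rw [Finset.sum_const, nsmul_eq_mul, hcardJ]
  -- split F into its three pieces
  set A : ℤ → ℤ → ℝ := fun k l => ∑' u : ℤ, |cum4 (-k) u (u - l)| with hAdef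
  set G1 : ℤ → ℤ → ℝ := fun k l => ∑' u : ℤ, |γ u| * |γ (-k - (u - l))| with hG1def
  set G2 : ℤ → ℤ → ℝ := fun k l => ∑' u : ℤ, |γ (u - l)| * |γ (-k - u)| with hG2def
  have hA0 : ∀ k l : ℤ, 0 ≤ A k l := fun k l => tsum_nonneg fun _ => abs_nonneg _
  have hG10 : ∀ k l : ℤ, 0 ≤ G1 k l :=
    fun k l => tsum_nonneg fun _ => mul_nonneg (abs_nonneg _) (abs_nonneg _)
  have hG20 : ∀ k l : ℤ, 0 ≤ G2 k l :=
    fun k l => tsum_nonneg fun _ => mul_nonneg (abs_nonneg _) (abs_nonneg _)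
  have hFsplit : ∀ k l : ℤ, F k l = A k l + G1 k l + G2 k l := by
    intro k l
    simp only [hFdef, hAdef, hG1def, hG2def, hfdef]
    rw [Summable.tsum_add ((hsum1 k l).add (hsum2 k l)) (hsum3 k l), Summable.tsum_add (hsum1 k l) (hsum2 k l)]
  -- bound for the cumulant part
  have hAsum : ∑ k ∈ I, ∑ l ∈ I, A (k : ℤ) (l : ℤ) ≤ SS := by
    have hinj : Function.Injective
        (fun q : (ℕ × ℕ) × ℤ => ((-(q.1.1 : ℤ), q.2, q.2 - (q.1.2 : ℤ)) : ℤ × ℤ × ℤ)) := by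
      intro a b hab
      simp only [Prod.mk.injEq] at hab
      obtain ⟨h1, h2, h3⟩ := hab
      refine Prod.ext (Prod.ext ?_ ?_) ?_ <;> omega
    have h := sum_tsum_comp_le hcumsum (fun x => abs_nonneg _) _ hinj (I ×ˢ I)
    rw [Finset.sum_product] at h
    exact h
  -- bounds for the γ parts
  have hG1row : ∀ k : ℕ, ∑ l ∈ I, G1 (k : ℤ) (l : ℤ) ≤ Γ ^ 2 := by
    intro k
    have hinj : Function.Injective
        (fun q : ℕ × ℤ => ((q.2, -(k : ℤ) - (q.2 - (q.1 : ℤ))) : ℤ × ℤ)) := by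
      intro a b hab
      simp only [Prod.mk.injEq] at hab
      refine Prod.ext ?_ ?_ <;> omega
    have h := sum_tsum_comp_le hγprod
      (fun x => mul_nonneg (abs_nonneg _) (abs_nonneg _)) _ hinj I
    rw [hΓΓ] at h
    exact h
  have hG1col : ∀ l : ℕ, ∑ k ∈ I, G1 (k : ℤ) (l : ℤ) ≤ Γ ^ 2 := by
    intro l
    have hinj : Function.Injective
        (fun q : ℕ × ℤ => ((q.2, -(q.1 : ℤ) - (q.2 - (l : ℤ))) : ℤ × ℤ)) := by
      intro a b hab
      simp only [Prod.mk.injEq] at hab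
      refine Prod.ext ?_ ?_ <;> omega
    have h := sum_tsum_comp_le hγprod
      (fun x => mul_nonneg (abs_nonneg _) (abs_nonneg _)) _ hinj I
    rw [hΓΓ] at h
    exact h
  have hG2row : ∀ k : ℕ, ∑ l ∈ I, G2 (k : ℤ) (l : ℤ) ≤ Γ ^ 2 := by
    intro k
    have hinj : Function.Injective
        (fun q : ℕ × ℤ => ((q.2 - (q.1 : ℤ), -(k : ℤ) - q.2) : ℤ × ℤ)) := by
      intro a b hab
      simp only [Prod.mk.injEq] at hab
      refine Prod.ext ?_ ?_ <;> omega
    have h := sum_tsum_comp_le hγprod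
      (fun x => mul_nonneg (abs_nonneg _) (abs_nonneg _)) _ hinj I
    rw [hΓΓ] at h
    exact h
  have hG2col : ∀ l : ℕ, ∑ k ∈ I, G2 (k : ℤ) (l : ℤ) ≤ Γ ^ 2 := by
    intro l
    have hinj : Function.Injective
        (fun q : ℕ × ℤ => ((q.2 - (l : ℤ), -(q.1 : ℤ) - q.2) : ℤ × ℤ)) := by
      intro a b hab
      simp only [Prod.mk.injEq] at hab
      refine Prod.ext ?_ ?_ <;> omega
    have h := sum_tsum_comp_le hγprod
      (fun x => mul_nonneg (abs_nonneg _) (abs_nonneg _)) _ hinj I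
    rw [hΓΓ] at h
    exact h
  -- generic quadratic-form bound for the γ parts
  have hquad : ∀ D : ℤ → ℤ → ℝ, (∀ k l : ℤ, 0 ≤ D k l) →
      (∀ k : ℕ, ∑ l ∈ I, D (k : ℤ) (l : ℤ) ≤ Γ ^ 2) →
      (∀ l : ℕ, ∑ k ∈ I, D (k : ℤ) (l : ℤ) ≤ Γ ^ 2) →
      ∑ k ∈ I, ∑ l ∈ I, |g k * g l| * D (k : ℤ) (l : ℤ) ≤ Γ ^ 2 * G := by
    intro D hD0 hrow hcol
    have h1 : ∑ k ∈ I, ∑ l ∈ I, |g k * g l| * D (k : ℤ) (l : ℤ)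
        ≤ ∑ k ∈ I, ∑ l ∈ I,
            (g k ^ 2 * D (k : ℤ) (l : ℤ) / 2 + g l ^ 2 * D (k : ℤ) (l : ℤ) / 2) := by
      refine Finset.sum_le_sum fun k _ => Finset.sum_le_sum fun l _ => ?_
      calc |g k * g l| * D (k : ℤ) (l : ℤ)
          ≤ (g k ^ 2 + g l ^ 2) / 2 * D (k : ℤ) (l : ℤ) :=
            mul_le_mul_of_nonneg_right (hgghalf k l) (hD0 _ _)
        _ = g k ^ 2 * D (k : ℤ) (l : ℤ) / 2 + g l ^ 2 * D (k : ℤ) (l : ℤ) / 2 := by ring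
    have h2 : ∑ k ∈ I, ∑ l ∈ I,
        (g k ^ 2 * D (k : ℤ) (l : ℤ) / 2 + g l ^ 2 * D (k : ℤ) (l : ℤ) / 2)
        = (∑ k ∈ I, ∑ l ∈ I, g k ^ 2 * D (k : ℤ) (l : ℤ) / 2)
          + ∑ k ∈ I, ∑ l ∈ I, g l ^ 2 * D (k : ℤ) (l : ℤ) / 2 := by
      rw [← Finset.sum_add_distrib]
      exact Finset.sum_congr rfl fun k _ => Finset.sum_add_distrib
    have h3 : ∑ k ∈ I, ∑ l ∈ I, g k ^ 2 * D (k : ℤ) (l : ℤ) / 2 ≤ Γ ^ 2 / 2 * G := by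
      have hterm3 : ∀ k ∈ I, ∑ l ∈ I, g k ^ 2 * D (k : ℤ) (l : ℤ) / 2
          ≤ Γ ^ 2 / 2 * g k ^ 2 := by
        intro k _
        have heq : ∑ l ∈ I, g k ^ 2 * D (k : ℤ) (l : ℤ) / 2
            = g k ^ 2 / 2 * ∑ l ∈ I, D (k : ℤ) (l : ℤ) := by
          rw [Finset.mul_sum]
          exact Finset.sum_congr rfl fun l _ => by ring
        rw [heq]
        calc g k ^ 2 / 2 * ∑ l ∈ I, D (k : ℤ) (l : ℤ)
            ≤ g k ^ 2 / 2 * Γ ^ 2 :=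
              mul_le_mul_of_nonneg_left (hrow k) (by positivity)
          _ = Γ ^ 2 / 2 * g k ^ 2 := by ring
      calc ∑ k ∈ I, ∑ l ∈ I, g k ^ 2 * D (k : ℤ) (l : ℤ) / 2
          ≤ ∑ k ∈ I, Γ ^ 2 / 2 * g k ^ 2 := Finset.sum_le_sum hterm3
        _ = Γ ^ 2 / 2 * ∑ k ∈ I, g k ^ 2 := (Finset.mul_sum _ _ _).symm
        _ ≤ Γ ^ 2 / 2 * G := mul_le_mul_of_nonneg_left hsumI (by positivity)
    have h4 : ∑ k ∈ I, ∑ l ∈ I, g l ^ 2 * D (k : ℤ) (l : ℤ) / 2 ≤ Γ ^ 2 / 2 * G := by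
      rw [Finset.sum_comm]
      have hterm4 : ∀ l ∈ I, ∑ k ∈ I, g l ^ 2 * D (k : ℤ) (l : ℤ) / 2
          ≤ Γ ^ 2 / 2 * g l ^ 2 := by
        intro l _
        have heq : ∑ k ∈ I, g l ^ 2 * D (k : ℤ) (l : ℤ) / 2
            = g l ^ 2 / 2 * ∑ k ∈ I, D (k : ℤ) (l : ℤ) := by
          rw [Finset.mul_sum]
          exact Finset.sum_congr rfl fun k _ => by ring
        rw [heq]
        calc g l ^ 2 / 2 * ∑ k ∈ I, D (k : ℤ) (l : ℤ)
            ≤ g l ^ 2 / 2 * Γ ^ 2 :=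
              mul_le_mul_of_nonneg_left (hcol l) (by positivity)
          _ = Γ ^ 2 / 2 * g l ^ 2 := by ring
      calc ∑ l ∈ I, ∑ k ∈ I, g l ^ 2 * D (k : ℤ) (l : ℤ) / 2
          ≤ ∑ l ∈ I, Γ ^ 2 / 2 * g l ^ 2 := Finset.sum_le_sum hterm4
        _ = Γ ^ 2 / 2 * ∑ l ∈ I, g l ^ 2 := (Finset.mul_sum _ _ _).symm
        _ ≤ Γ ^ 2 / 2 * G := mul_le_mul_of_nonneg_left hsumI (by positivity)
    calc ∑ k ∈ I, ∑ l ∈ I, |g k * g l| * D (k : ℤ) (l : ℤ)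
        ≤ (∑ k ∈ I, ∑ l ∈ I, g k ^ 2 * D (k : ℤ) (l : ℤ) / 2)
          + ∑ k ∈ I, ∑ l ∈ I, g l ^ 2 * D (k : ℤ) (l : ℤ) / 2 := h2 ▸ h1
      _ ≤ Γ ^ 2 / 2 * G + Γ ^ 2 / 2 * G := add_le_add h3 h4
      _ = Γ ^ 2 * G := by ring
  -- cumulant part bound
  have hQA : ∑ k ∈ I, ∑ l ∈ I, |g k * g l| * A (k : ℤ) (l : ℤ) ≤ G * SS := by
    calc ∑ k ∈ I, ∑ l ∈ I, |g k * g l| * A (k : ℤ) (l : ℤ)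
        ≤ ∑ k ∈ I, ∑ l ∈ I, G * A (k : ℤ) (l : ℤ) :=
          Finset.sum_le_sum fun k hk => Finset.sum_le_sum fun l hl =>
            mul_le_mul_of_nonneg_right (hggG k hk l hl) (hA0 _ _)
      _ = G * ∑ k ∈ I, ∑ l ∈ I, A (k : ℤ) (l : ℤ) := by
          rw [Finset.mul_sum]
          exact Finset.sum_congr rfl fun k _ => (Finset.mul_sum _ _ _).symm
      _ ≤ G * SS := mul_le_mul_of_nonneg_left hAsum hG0
  -- total bound on the (k, l) sum
  have hQ : ∑ k ∈ I, ∑ l ∈ I, |g k * g l| * F (k : ℤ) (l : ℤ)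
      ≤ G * SS + Γ ^ 2 * G + Γ ^ 2 * G := by
    have hsplit : ∑ k ∈ I, ∑ l ∈ I, |g k * g l| * F (k : ℤ) (l : ℤ)
        = (∑ k ∈ I, ∑ l ∈ I, |g k * g l| * A (k : ℤ) (l : ℤ))
          + (∑ k ∈ I, ∑ l ∈ I, |g k * g l| * G1 (k : ℤ) (l : ℤ))
          + ∑ k ∈ I, ∑ l ∈ I, |g k * g l| * G2 (k : ℤ) (l : ℤ) := by
      rw [← Finset.sum_add_distrib, ← Finset.sum_add_distrib]
      refine Finset.sum_congr rfl fun k _ => ?_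
      rw [← Finset.sum_add_distrib, ← Finset.sum_add_distrib]
      refine Finset.sum_congr rfl fun l _ => ?_
      rw [hFsplit (k : ℤ) (l : ℤ)]
      ring
    have hq1 := hquad G1 hG10 hG1row hG1col
    have hq2 := hquad G2 hG20 hG2row hG2col
    rw [hsplit]
    linarith [hQA]
  -- final assembly
  rw [hVar]
  have hm0 : (0 : ℝ) ≤ (m : ℝ) := Nat.cast_nonneg m
  calc ∑ p ∈ P, ∑ q ∈ P, ∫ ω, Z p ω * Z q ω ∂μ
      ≤ ∑ p ∈ P, ∑ q ∈ P,
          |g p.1 * g q.1| * f (p.1 : ℤ) (q.1 : ℤ) ((q.2 : ℤ) - (p.2 : ℤ)) :=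
        Finset.sum_le_sum fun p hp => Finset.sum_le_sum fun q hq => hterm p hp q hq
    _ = ∑ k ∈ I, ∑ l ∈ I, |g k * g l|
          * ∑ t ∈ J, ∑ s ∈ J, f (k : ℤ) (l : ℤ) ((s : ℤ) - (t : ℤ)) := by
        rw [hPdef, Finset.sum_product]
        refine Finset.sum_congr rfl fun k _ => ?_
        rw [show (∑ t ∈ J, ∑ q ∈ I ×ˢ J,
              |g k * g q.1| * f (k : ℤ) (q.1 : ℤ) ((q.2 : ℤ) - (t : ℤ)))
            = ∑ t ∈ J, ∑ l ∈ I, ∑ s ∈ J,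
              |g k * g l| * f (k : ℤ) (l : ℤ) ((s : ℤ) - (t : ℤ)) from
          Finset.sum_congr rfl fun t _ => Finset.sum_product _ _ _]
        rw [Finset.sum_comm]
        refine Finset.sum_congr rfl fun l _ => ?_
        rw [Finset.mul_sum]
        exact Finset.sum_congr rfl fun t _ => (Finset.mul_sum _ _ _).symm
    _ ≤ ∑ k ∈ I, ∑ l ∈ I, |g k * g l| * ((m : ℝ) * F (k : ℤ) (l : ℤ)) :=
        Finset.sum_le_sum fun k _ => Finset.sum_le_sum fun l _ =>
          mul_le_mul_of_nonneg_left (hdouble (k : ℤ) (l : ℤ)) (abs_nonneg _)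
    _ = (m : ℝ) * ∑ k ∈ I, ∑ l ∈ I, |g k * g l| * F (k : ℤ) (l : ℤ) := by
        rw [Finset.mul_sum]
        refine Finset.sum_congr rfl fun k _ => ?_
        rw [Finset.mul_sum]
        exact Finset.sum_congr rfl fun l _ => by ring
    _ ≤ (m : ℝ) * (G * SS + Γ ^ 2 * G + Γ ^ 2 * G) :=
        mul_le_mul_of_nonneg_left hQ hm0
    _ = (SS + 2 * Γ ^ 2) * (m : ℝ) * G := by ring
end
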